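/- arXiv:1211.1576 — 6 statements merged into one kernel-verified Lean document; each statement's English description precedes it below -/
import Mathlib

section
/- For all real z ≥ 1, (2π)^{1/2} exp(-z + (z - 1/2) log z) ≤ Γ(z) ≤ (2π)^{1/2} exp(-z + (z - 1/2) log z + 1/(12 z)). -/
open Real Filter Topology

/-- The summand `(w + 1/2) log(1 + 1/w) - 1` in the Stirling error series. -/
noncomputable def gS (a : ℝ) : ℝ := (a + 1/2) * Real.log (1 + a⁻¹) - 1

lemma gS_hasSum {a : ℝ} (ha : 0 < a) :
    HasSum (fun k : ℕ => (1 / (2 * (k:ℝ) + 3)) * ((1/(2*a+1))^2) ^ (k+1)) (gS a) := by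
  have h := (Real.hasSum_log_one_add_inv ha).mul_left (a + 1/2)
  set f : ℕ → ℝ := fun k => (a + 1/2) * ((2:ℝ) * (1 / (2 * k + 1)) * (1 / (2 * a + 1)) ^ (2 * k + 1)) with hf
  have h1 : (2*a+1) ≠ 0 := by positivity
  have h0 : f 0 = 1 := by
    simp only [hf]
    field_simp
    simp only [one_div, inv_pow]
    field_simp
    ring
  have key : HasSum (fun k => f (k + 1)) (gS a) := by
    rw [hasSum_nat_add_iff 1]
    simpa [h0, gS, sub_add_cancel] using h
  convert key using 2 with k
  simp only [hf]
  rw [← pow_mul]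
  push_cast
  field_simp
  simp only [one_div, inv_pow]
  field_simp
  ring

lemma gS_nonneg {a : ℝ} (ha : 0 < a) : 0 ≤ gS a :=
  (gS_hasSum ha).nonneg fun k => by positivity

lemma gS_le {a : ℝ} (ha : 0 < a) : gS a ≤ 1/(12*a) - 1/(12*(a+1)) := by
  set q : ℝ := (1/(2*a+1))^2 with hq
  have hq0 : 0 ≤ q := sq_nonneg _
  have hq1 : q < 1 := by
    rw [hq, div_pow, one_pow, div_lt_one (by positivity)]
    nlinarith
  have hgeo : HasSum (fun k : ℕ => (1/3 : ℝ) * q ^ (k+1)) ((1/3) * (q / (1 - q))) := by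
    have h := (hasSum_geometric_of_lt_one hq0 hq1).mul_left ((1/3) * q)
    convert h using 1
    · rfl
    · funext k; rw [pow_succ']; ring
    · rw [div_eq_mul_inv]; ring
  have hle : gS a ≤ (1/3) * (q / (1 - q)) := by
    refine hasSum_le (fun k => ?_) (gS_hasSum ha) hgeo
    apply mul_le_mul_of_nonneg_right _ (pow_nonneg hq0 _)
    rw [div_le_div_iff₀ (by positivity) (by norm_num)]
    linarith [Nat.cast_nonneg (α := ℝ) k]
  refine hle.trans_eq ?_
  have h1 : (2*a+1) ≠ 0 := by positivity
  rw [hq]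
  have h2 : 1 - (1/(2*a+1))^2 = (4*a*(a+1))/(2*a+1)^2 := by field_simp; ring
  rw [h2]
  field_simp
  ring

/-- The main term in Stirling's formula. -/
noncomputable def SS (w : ℝ) : ℝ := (w - 1/2) * Real.log w - w + Real.log (2 * Real.pi) / 2

/-- The Stirling error term `log Γ(w) - S(w)`. -/
noncomputable def FS (w : ℝ) : ℝ := Real.log (Real.Gamma w) - SS w

lemma FS_rec {w : ℝ} (hw : 0 < w) : FS w = gS w + FS (w + 1) := by
  have hΓ : Real.Gamma (w + 1) = w * Real.Gamma w := Real.Gamma_add_one hw.ne'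
  have hΓpos : 0 < Real.Gamma w := Real.Gamma_pos_of_pos hw
  have hlog : Real.log (Real.Gamma (w+1)) = Real.log w + Real.log (Real.Gamma w) := by
    rw [hΓ, Real.log_mul hw.ne' hΓpos.ne']
  have hinv : Real.log (1 + w⁻¹) = Real.log (w + 1) - Real.log w := by
    rw [← Real.log_div (by positivity) hw.ne']
    congr 1
    field_simp
  simp only [FS, SS, gS, hlog, hinv]
  ring

lemma FS_telescope {z : ℝ} (hz : 0 < z) (N : ℕ) :
    FS z = (∑ n ∈ Finset.range N, gS (z + n)) + FS (z + N) := by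
  induction N with
  | zero => simp
  | succ n ih =>
    rw [ih, Finset.sum_range_succ, FS_rec (w := z + n) (by positivity)]
    push_cast
    ring_nf

lemma FS_bounds {z : ℝ} (hz : 0 < z) (N : ℕ) :
    FS (z + N) ≤ FS z ∧ FS z ≤ FS (z + N) + 1/(12*z) := by
  have h := FS_telescope hz N
  have hsum0 : 0 ≤ ∑ n ∈ Finset.range N, gS (z + n) :=
    Finset.sum_nonneg fun n _ => gS_nonneg (by positivity)
  have hsumle : (∑ n ∈ Finset.range N, gS (z + n)) ≤ 1/(12*z) := by
    have step : (∑ n ∈ Finset.range N, gS (z + n)) ≤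
        ∑ n ∈ Finset.range N, (1/(12*(z+n)) - 1/(12*(z+n+1))) :=
      Finset.sum_le_sum fun n _ => by
        have := gS_le (a := z + n) (by positivity)
        simpa [add_assoc] using this
    refine step.trans ?_
    have htel : ∑ n ∈ Finset.range N, (1/(12*(z+n)) - 1/(12*(z+n+1)))
        = 1/(12*z) - 1/(12*(z+N)) := by
      have := Finset.sum_range_sub' (f := fun n : ℕ => 1/(12*(z+n))) N
      simpa [add_assoc] using this
    rw [htel]
    have : 0 ≤ 1/(12*(z+N)) := by positivity
    linarith
  constructor <;> linarith

lemma tendsto_log_one_add_div (c : ℝ) :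
    Filter.Tendsto (fun n : ℕ => Real.log (1 + c/(n:ℝ))) atTop (𝓝 0) := by
  have h1 : Filter.Tendsto (fun n : ℕ => 1 + c/(n:ℝ)) atTop (𝓝 1) := by
    simpa using (tendsto_const_div_atTop_nhds_zero_nat c).const_add 1
  have := (Real.continuousAt_log one_ne_zero).tendsto.comp h1
  rw [Real.log_one] at this
  exact this

lemma tendsto_nat_mul_log_one_add (c : ℝ) :
    Filter.Tendsto (fun n : ℕ => (n:ℝ) * Real.log (1 + c/(n:ℝ))) atTop (𝓝 c) := by
  have h := Real.tendsto_one_add_div_pow_exp c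
  have hpos : ∀ᶠ n : ℕ in atTop, 0 < 1 + c/(n:ℝ) := by
    have h1 : Filter.Tendsto (fun n : ℕ => 1 + c/(n:ℝ)) atTop (𝓝 1) := by
      simpa using (tendsto_const_div_atTop_nhds_zero_nat c).const_add 1
    exact h1.eventually (eventually_gt_nhds one_pos)
  have hlog := (Real.continuousAt_log (Real.exp_pos c).ne').tendsto.comp h
  rw [Real.log_exp] at hlog
  refine hlog.congr' ?_
  filter_upwards [hpos] with n hn
  simp [Real.log_pow, mul_comm]

lemma Gamma_add_nat {z : ℝ} (hz : 0 < z) (n : ℕ) :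
    Real.Gamma (z + n) = Real.Gamma z * ∏ j ∈ Finset.range n, (z + j) := by
  induction n with
  | zero => simp
  | succ n ih =>
    have h : z + ((n:ℕ)+1 : ℕ) = (z + n) + 1 := by push_cast; ring
    rw [h, Real.Gamma_add_one (by positivity), ih, Finset.prod_range_succ]
    ring

lemma FS_eq {z : ℝ} (hz : 0 < z) (n : ℕ) (hn : 1 ≤ n) :
    FS (z + n + 1) =
      (Real.log (Real.Gamma z) - Real.log (Real.GammaSeq z n))
      + (Real.log (Stirling.stirlingSeq n) - Real.log (Real.sqrt Real.pi))
      + ((z + 1) - (n:ℝ) * Real.log (1 + (z+1)/(n:ℝ)))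
      - (z + 1/2) * Real.log (1 + (z+1)/(n:ℝ)) := by
  have hn0 : (0:ℝ) < n := by exact_mod_cast hn
  set P : ℝ := ∏ j ∈ Finset.range (n+1), (z + j) with hP
  have hPpos : 0 < P := Finset.prod_pos fun j _ => by positivity
  have e1 : Real.log (Real.Gamma (z + n + 1)) = Real.log (Real.Gamma z) + Real.log P := by
    have h := Gamma_add_nat hz (n+1)
    push_cast at h
    rw [← add_assoc] at h
    rw [h, Real.log_mul (Real.Gamma_pos_of_pos hz).ne' hPpos.ne']
  have hGSdef : Real.GammaSeq z n = (n:ℝ) ^ z * (n.factorial : ℝ) / P := rfl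
  have hGSpos : 0 < Real.GammaSeq z n := by
    rw [hGSdef]; positivity
  have e2 : Real.log (Real.GammaSeq z n)
      = z * Real.log n + Real.log (n.factorial : ℝ) - Real.log P := by
    rw [hGSdef, Real.log_div (by positivity) hPpos.ne',
      Real.log_mul (by positivity) (by positivity), Real.log_rpow hn0]
  have e3 : Real.log (n.factorial : ℝ) = Real.log (Stirling.stirlingSeq n)
      + 1/2 * (Real.log 2 + Real.log n) + (n:ℝ) * (Real.log n - 1) := by
    have h := Stirling.log_stirlingSeq_formula n
    rw [Real.log_mul two_ne_zero hn0.ne', Real.log_div hn0.ne' (Real.exp_ne_zero 1),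
      Real.log_exp] at h
    linarith
  have e4 : Real.log (z + n + 1) = Real.log n + Real.log (1 + (z+1)/(n:ℝ)) := by
    rw [← Real.log_mul hn0.ne' (by positivity)]
    congr 1
    field_simp
    ring
  have e5 : Real.log (2 * Real.pi) = Real.log 2 + Real.log Real.pi :=
    Real.log_mul two_ne_zero Real.pi_ne_zero
  have e6 : Real.log (Real.sqrt Real.pi) = Real.log Real.pi / 2 :=
    Real.log_sqrt Real.pi_pos.le
  have e7 : Real.log P = z * Real.log n + Real.log (n.factorial : ℝ)
      - Real.log (Real.GammaSeq z n) := by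
    linarith
  simp only [FS, SS]
  rw [e1, e7, e3, e4, e5, e6]
  ring

lemma FS_tendsto_zero {z : ℝ} (hz : 0 < z) :
    Filter.Tendsto (fun N : ℕ => FS (z + N)) atTop (𝓝 0) := by
  have hΓpos : 0 < Real.Gamma z := Real.Gamma_pos_of_pos hz
  have hA : Filter.Tendsto (fun n : ℕ =>
      Real.log (Real.Gamma z) - Real.log (Real.GammaSeq z n)) atTop (𝓝 0) := by
    have := (Real.continuousAt_log hΓpos.ne').tendsto.comp (Real.GammaSeq_tendsto_Gamma z)
    simpa using (tendsto_const_nhds (x := Real.log (Real.Gamma z))).sub this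
  have hB : Filter.Tendsto (fun n : ℕ =>
      Real.log (Stirling.stirlingSeq n) - Real.log (Real.sqrt Real.pi)) atTop (𝓝 0) := by
    have hsq : (Real.sqrt Real.pi) ≠ 0 := by positivity
    have := (Real.continuousAt_log hsq).tendsto.comp Stirling.tendsto_stirlingSeq_sqrt_pi
    simpa using this.sub (tendsto_const_nhds (x := Real.log (Real.sqrt Real.pi)))
  have hC : Filter.Tendsto (fun n : ℕ =>
      (z + 1) - (n:ℝ) * Real.log (1 + (z+1)/(n:ℝ))) atTop (𝓝 0) := by
    simpa using (tendsto_const_nhds (x := z+1)).sub (tendsto_nat_mul_log_one_add (z+1))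
  have hD : Filter.Tendsto (fun n : ℕ =>
      (z + 1/2) * Real.log (1 + (z+1)/(n:ℝ))) atTop (𝓝 0) := by
    simpa using (tendsto_log_one_add_div (z+1)).const_mul (z + 1/2)
  have hT : Filter.Tendsto (fun n : ℕ =>
      (Real.log (Real.Gamma z) - Real.log (Real.GammaSeq z n))
      + (Real.log (Stirling.stirlingSeq n) - Real.log (Real.sqrt Real.pi))
      + ((z + 1) - (n:ℝ) * Real.log (1 + (z+1)/(n:ℝ)))
      - (z + 1/2) * Real.log (1 + (z+1)/(n:ℝ))) atTop (𝓝 0) := by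
    simpa using ((hA.add hB).add hC).sub hD
  rw [← tendsto_add_atTop_iff_nat 2]
  refine hT.comp (tendsto_add_atTop_nat 1) |>.congr ?_
  intro n
  rw [Function.comp_apply, ← FS_eq hz (n+1) le_add_self]
  congr 1
  push_cast
  ring

/-- Stirling-type bounds for the Gamma function: for `z ≥ 1`,
`√(2π) e^{-z+(z-1/2)log z} ≤ Γ(z) ≤ √(2π) e^{-z+(z-1/2)log z + 1/(12z)}`. -/
theorem gamma_stirling_bounds (z : ℝ) (hz : 1 ≤ z) :
    (2 * Real.pi) ^ ((1 : ℝ) / 2) * Real.exp (-z + (z - 1 / 2) * Real.log z) ≤ Real.Gamma z ∧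
    Real.Gamma z ≤
      (2 * Real.pi) ^ ((1 : ℝ) / 2) *
        Real.exp (-z + (z - 1 / 2) * Real.log z + 1 / (12 * z)) := by
  have hz0 : 0 < z := lt_of_lt_of_le one_pos hz
  have hΓpos : 0 < Real.Gamma z := Real.Gamma_pos_of_pos hz0
  have hlim := FS_tendsto_zero hz0
  have h0 : 0 ≤ FS z :=
    le_of_tendsto' hlim fun N => (FS_bounds hz0 N).1
  have h1 : FS z ≤ 1/(12*z) := by
    have hlim' : Filter.Tendsto (fun N : ℕ => FS (z + N) + 1/(12*z)) atTop (𝓝 (0 + 1/(12*z))) :=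
      hlim.add_const _
    rw [zero_add] at hlim'
    exact ge_of_tendsto' hlim' fun N => (FS_bounds hz0 N).2
  have hrw : (2 * Real.pi) ^ ((1 : ℝ) / 2) = Real.exp (Real.log (2 * Real.pi) / 2) := by
    rw [Real.rpow_def_of_pos (by positivity)]
    ring_nf
  have hΓ : Real.Gamma z = Real.exp (SS z + FS z) := by
    have : SS z + FS z = Real.log (Real.Gamma z) := by simp [FS]
    rw [this, Real.exp_log hΓpos]
  constructor
  · rw [hrw, ← Real.exp_add, hΓ]
    apply Real.exp_le_exp.mpr
    simp only [SS]
    linarith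
  · rw [hrw, ← Real.exp_add, hΓ]
    apply Real.exp_le_exp.mpr
    simp only [SS]
    linarith
end

section
/- Let X² be distributed as a product of n i.i.d. Gamma(k,1) variables (n, k positive integers) and let r > 0 satisfy r^{2/n} < k. Then P(X² < r²) ≥ (r^{2/n}/(2k))^{nk}. -/
open MeasureTheory ProbabilityTheory

section Aux

open Real Set


lemma fact_exp_le (k : ℕ) (hk : 2 ≤ k) : (k.factorial : ℝ) * Real.exp k ≤ (2 * k) ^ k := by
  induction k with
  | zero => omega
  | succ m ih =>
    rcases Nat.lt_or_ge m 2 with hm | hm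
    · interval_cases m
      · omega
      · have he : Real.exp 1 < 2.7182818286 := Real.exp_one_lt_d9
        have he0 : (0:ℝ) < Real.exp 1 := Real.exp_pos 1
        have h2 : Real.exp 2 = Real.exp 1 * Real.exp 1 := by
          rw [← Real.exp_add]; norm_num
        have : Nat.factorial 2 = 2 := rfl
        push_cast [this]
        rw [h2]
        have hee : Real.exp 1 * Real.exp 1 < 2.7182818286 * 2.7182818286 :=
          mul_lt_mul'' he he he0.le he0.le
        nlinarith
    · have ih' := ih hm
      have hm0 : (0:ℝ) < m := by positivity
      have hpow : (2*(m:ℝ))^m * 2 ≤ (2*(m:ℝ)+2)^m := by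
        have h1 : ((2:ℝ)*m+2)^m = (2*m)^m * (1 + 1/m)^m := by
          rw [← mul_pow]
          congr 1
          field_simp
        have h2 : (2:ℝ) ≤ (1 + 1/(m:ℝ))^m := by
          have hnn : (0:ℝ) ≤ 1/(m:ℝ) := by positivity
          have h := one_add_mul_le_pow (a := 1/(m:ℝ)) (by linarith) m
          rw [mul_one_div, div_self hm0.ne'] at h
          linarith
        rw [h1]
        nlinarith [pow_pos (by positivity : (0:ℝ) < 2*m) m]
      have he : Real.exp 1 ≤ 4 := by
        have := Real.exp_one_lt_d9; linarith
      have hexp : Real.exp ((m:ℝ)+1) = Real.exp m * Real.exp 1 := by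
        rw [← Real.exp_add]
      rw [Nat.factorial_succ]
      push_cast
      rw [hexp]
      have hfm : (0:ℝ) ≤ m.factorial := by positivity
      have hem : (0:ℝ) < Real.exp m := Real.exp_pos _
      have hA : (m.factorial:ℝ) * Real.exp m * Real.exp 1 ≤ (2*(m:ℝ))^m * 4 :=
        mul_le_mul ih' he (Real.exp_pos 1).le (by positivity)
      calc ((m:ℝ)+1) * m.factorial * (Real.exp m * Real.exp 1)
          = ((m:ℝ)+1) * ((m.factorial:ℝ) * Real.exp m * Real.exp 1) := by ring
        _ ≤ ((m:ℝ)+1) * ((2*(m:ℝ))^m * 4) := by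
            apply mul_le_mul_of_nonneg_left hA (by positivity)
        _ ≤ ((m:ℝ)+1) * (2 * (2*(m:ℝ)+2)^m) := by nlinarith
        _ = (2*((m:ℝ)+1)) * (2*(m:ℝ)+2)^m := by ring
        _ = (2*((m:ℝ)+1))^(m+1) := by rw [pow_succ]; ring

lemma gamma_lower_aux (a : ℝ) {s : ℝ} (g : ℝ → ℝ) (hgc : Continuous g)
    (hg0 : ∀ x ∈ Ioo 0 s, 0 ≤ g x)
    (hgle : ∀ x ∈ Ioo 0 s, g x ≤ gammaPDFReal a 1 x) :
    ENNReal.ofReal (∫ x in Ioo 0 s, g x) ≤ gammaMeasure a 1 (Ioo 0 s) := by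
  rw [gammaMeasure, withDensity_apply _ measurableSet_Ioo]
  have hint : IntegrableOn g (Ioo 0 s) :=
    (hgc.integrableOn_Icc).mono_set Ioo_subset_Icc_self
  have hnn : 0 ≤ᵐ[volume.restrict (Ioo 0 s)] g :=
    (ae_restrict_iff' measurableSet_Ioo).mpr (ae_of_all _ hg0)
  rw [ofReal_integral_eq_lintegral_ofReal hint hnn]
  exact setLIntegral_mono (measurable_gammaPDFReal a 1).ennreal_ofReal
    (fun x hx => ENNReal.ofReal_le_ofReal (hgle x hx))

lemma gamma_Ioo_lower (k : ℕ) (hk : 0 < k) {s : ℝ} (hs : 0 < s) (hsk : s < k) :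
    ENNReal.ofReal ((s / (2 * k)) ^ k) ≤ gammaMeasure k 1 (Ioo 0 s) := by
  obtain ⟨m, rfl⟩ : ∃ m, k = m + 1 := ⟨k - 1, (Nat.succ_pred_eq_of_pos hk).symm⟩
  rcases Nat.eq_zero_or_pos m with rfl | hm
  · -- k = 1
    have hs1 : s < 1 := by push_cast at hsk; linarith
    norm_num
    have hpdf : ∀ x ∈ Ioo 0 s, (1:ℝ) - x ≤ gammaPDFReal 1 1 x := by
      intro x hx
      rw [gammaPDFReal, if_pos hx.1.le]
      norm_num [Real.Gamma_one]
      linarith [Real.add_one_le_exp (-x)]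
    have key := gamma_lower_aux 1 (fun x => 1 - x)
      (continuous_const.sub continuous_id)
      (fun x hx => by show (0:ℝ) ≤ 1 - x; nlinarith [hx.2]) hpdf
    refine le_trans ?_ key
    apply ENNReal.ofReal_le_ofReal
    have hcalc : ∫ x in Ioo 0 s, (1 - x) = s - s^2/2 := by
      rw [← integral_Ioc_eq_integral_Ioo, ← intervalIntegral.integral_of_le hs.le,
        intervalIntegral.integral_sub intervalIntegrable_const
          intervalIntegral.intervalIntegrable_id]
      simp [integral_id]
    rw [hcalc]
    nlinarith
  · -- k = m + 1 ≥ 2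
    have hk2 : 2 ≤ m + 1 := by omega
    have hkR : (0:ℝ) < (m:ℝ) + 1 := by positivity
    have hfac : (0:ℝ) < m.factorial := by positivity
    set c : ℝ := Real.exp (-s) / m.factorial with hc
    have hpdf : ∀ x ∈ Ioo 0 s, x ^ m * c ≤ gammaPDFReal (m+1 : ℕ) 1 x := by
      intro x hx
      rw [gammaPDFReal, if_pos hx.1.le]
      have h1 : ((m+1 : ℕ):ℝ) - 1 = (m:ℝ) := by push_cast; ring
      have hG : Real.Gamma ((m+1 : ℕ):ℝ) = m.factorial := by
        rw [show ((m+1:ℕ):ℝ) = (m:ℝ) + 1 by push_cast; ring]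
        exact Real.Gamma_nat_eq_factorial m
      rw [Real.one_rpow, hG, h1, Real.rpow_natCast, one_mul]
      have hexp : Real.exp (-s) ≤ Real.exp (-x) :=
        Real.exp_le_exp.mpr (by linarith [hx.2])
      calc x ^ m * c = x ^ m * Real.exp (-s) / m.factorial := by rw [hc]; ring
        _ ≤ x ^ m * Real.exp (-x) / m.factorial := by
            have hxm : 0 ≤ x ^ m := pow_nonneg hx.1.le m
            gcongr
        _ = 1 / m.factorial * x ^ m * Real.exp (-x) := by ring
    have key := gamma_lower_aux ((m+1 : ℕ):ℝ) (fun x => x ^ m * c)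
      ((continuous_pow m).mul continuous_const)
      (fun x hx => by have := hx.1.le; positivity) hpdf
    refine le_trans ?_ key
    apply ENNReal.ofReal_le_ofReal
    have hcalc : ∫ x in Ioo 0 s, x ^ m * c = s ^ (m+1) * Real.exp (-s) / (m+1).factorial := by
      rw [← integral_Ioc_eq_integral_Ioo, ← intervalIntegral.integral_of_le hs.le,
        intervalIntegral.integral_mul_const, integral_pow]
      rw [hc, Nat.factorial_succ]
      push_cast
      field_simp
      simp
    rw [hcalc]
    -- (s/(2(m+1)))^(m+1) ≤ s^(m+1) exp(-s)/(m+1)!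
    have hexps : (0:ℝ) < Real.exp s := Real.exp_pos s
    have hkey : ((m+1).factorial : ℝ) * Real.exp s ≤ (2*((m:ℝ)+1))^(m+1) := by
      have h1 := fact_exp_le (m+1) hk2
      have h2 : Real.exp s ≤ Real.exp ((m:ℝ)+1) := Real.exp_le_exp.mpr (by push_cast at hsk; linarith)
      calc ((m+1).factorial : ℝ) * Real.exp s ≤ ((m+1).factorial : ℝ) * Real.exp ((m:ℝ)+1) := by
            gcongr
        _ ≤ (2*((m:ℝ)+1))^(m+1) := by push_cast at h1 ⊢; convert h1 using 2 <;> push_cast <;> ring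
    have key2 : ((m+1).factorial : ℝ) ≤ Real.exp (-s) * (2*((m:ℝ)+1))^(m+1) := by
      have hmul : Real.exp (-s) * Real.exp s = 1 := by
        rw [← Real.exp_add]; simp
      nlinarith [mul_le_mul_of_nonneg_right hkey (Real.exp_pos (-s)).le]
    have h2k : (0:ℝ) < (2*((m:ℝ)+1))^(m+1) := by positivity
    have hfacs : (0:ℝ) < ((m+1).factorial : ℝ) := by positivity
    have hsk0 : (0:ℝ) < s ^ (m+1) := by positivity
    have hcast : ((m+1 : ℕ):ℝ) = (m:ℝ)+1 := by push_cast; ring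
    rw [hcast, div_pow, div_le_div_iff₀ h2k hfacs]
    nlinarith [mul_le_mul_of_nonneg_left key2 hsk0.le]

end Aux

open Set

/-- The distribution of the product of `n` i.i.d. `Gamma(k,1)` random variables. -/
noncomputable def prodGammaMeasure (n k : ℕ) : Measure ℝ :=
  (Measure.pi fun _ : Fin n => gammaMeasure k 1).map (fun y => ∏ j, y j)

/-- Lower bound `P(X² < r²) ≥ (r^{2/n}/(2k))^{nk}` when `r^{2/n} < k`. -/
theorem prodGamma_lower_tail_lower_bound {Ω : Type*} [MeasureSpace Ω]
    [IsProbabilityMeasure (ℙ : Measure Ω)]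
    (n k : ℕ) (hn : 0 < n) (hk : 0 < k)
    (X : Ω → ℝ) (hXm : Measurable X) (hX0 : ∀ ω, 0 ≤ X ω)
    (hX : Measure.map (fun ω => X ω ^ 2) ℙ = prodGammaMeasure n k)
    (r : ℝ) (hr : 0 < r) (hrk : r ^ ((2 : ℝ) / n) < (k : ℝ)) :
    (r ^ ((2 : ℝ) / n) / (2 * (k : ℝ))) ^ (n * k) ≤ (ℙ {ω | X ω ^ 2 < r ^ 2}).toReal := by
  set s : ℝ := r ^ ((2 : ℝ) / n) with hsdef
  have hs : 0 < s := Real.rpow_pos_of_pos hr _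
  have hnR : ((n:ℝ)) ≠ 0 := Nat.cast_ne_zero.mpr hn.ne'
  have hsn : s ^ n = r ^ 2 := by
    rw [hsdef, ← Real.rpow_natCast (r ^ ((2:ℝ)/n)) n, ← Real.rpow_mul hr.le,
      div_mul_cancel₀ _ hnR, Real.rpow_two]
  have hmeas : Measurable (fun ω => X ω ^ 2) := hXm.pow_const 2
  have hprodm : Measurable (fun y : Fin n → ℝ => ∏ j, y j) :=
    Finset.measurable_prod _ (fun i _ => measurable_pi_apply i)
  have hset : {ω | X ω ^ 2 < r ^ 2} = (fun ω => X ω ^ 2) ⁻¹' (Iio (r ^ 2)) := rfl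
  have hP : ℙ {ω | X ω ^ 2 < r ^ 2} = prodGammaMeasure n k (Iio (r ^ 2)) := by
    rw [hset, ← Measure.map_apply hmeas measurableSet_Iio, hX]
  have hsubset : (Set.univ.pi fun _ : Fin n => Ioo (0:ℝ) s) ⊆
      (fun y : Fin n → ℝ => ∏ j, y j) ⁻¹' (Iio (r ^ 2)) := by
    intro y hy
    simp only [Set.mem_pi, Set.mem_univ, forall_true_left, mem_Ioo] at hy
    have hlt : ∏ j, y j < ∏ _j : Fin n, s := by
      refine Finset.prod_lt_prod_of_nonempty (fun i _ => (hy i).1) (fun i _ => (hy i).2) ?_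
      exact Finset.univ_nonempty_iff.mpr ⟨⟨0, hn⟩⟩
    have : (∏ _j : Fin n, s) = s ^ n := by
      rw [Finset.prod_const, Finset.card_univ, Fintype.card_fin]
    simp only [Set.mem_preimage, mem_Iio]
    rw [← hsn]
    rw [this] at hlt
    exact hlt
  have hprob : IsProbabilityMeasure (gammaMeasure (k:ℝ) 1) :=
    isProbabilityMeasure_gammaMeasure (by exact_mod_cast hk) one_pos
  have hbound : ENNReal.ofReal ((s / (2 * k)) ^ (n * k)) ≤ ℙ {ω | X ω ^ 2 < r ^ 2} := by
    rw [hP, prodGammaMeasure, Measure.map_apply hprodm measurableSet_Iio]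
    calc ENNReal.ofReal ((s / (2 * k)) ^ (n * k))
        = (ENNReal.ofReal ((s / (2 * k)) ^ k)) ^ n := by
          rw [mul_comm n k, pow_mul, ENNReal.ofReal_pow (by positivity)]
      _ ≤ (gammaMeasure k 1 (Ioo 0 s)) ^ n := by
          exact pow_le_pow_left' (gamma_Ioo_lower k hk hs hrk) n
      _ = (Measure.pi fun _ : Fin n => gammaMeasure k 1) (Set.univ.pi fun _ => Ioo 0 s) := by
          rw [Measure.pi_pi]
          rw [Finset.prod_const, Finset.card_univ, Fintype.card_fin]
      _ ≤ _ := measure_mono hsubset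
  have hne : ℙ {ω | X ω ^ 2 < r ^ 2} ≠ ⊤ := measure_ne_top _ _
  exact (ENNReal.ofReal_le_iff_le_toReal hne).mp hbound
end

section
/- Let n, k be positive integers and let X² be distributed as a product of n i.i.d. Gamma(k,1) variables. Then for r ≥ 1 with r^{2/n} ≥ k, P(X² > r²) ≤ exp(−n(r^{2/n} − k) + (n/2)·log(k/r^{2/n}) − n·k·log(k/r^{2/n}) + n/(12 r^{2/n})). -/
open MeasureTheory ProbabilityTheory
open scoped ENNReal

section Aux
open Real Filter

noncomputable def auxF (z : ℝ) : ℝ := Real.log (Real.Gamma z) - (z - 1/2) * Real.log z + z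
noncomputable def auxH (z : ℝ) : ℝ := (z + 1/2) * (Real.log (z+1) - Real.log z) - 1

lemma log_le_half_sub_inv {y : ℝ} (hy : 1 ≤ y) : Real.log y ≤ (y - y⁻¹) / 2 := by
  have h0 : 0 < y := lt_of_lt_of_le one_pos hy
  have hl : 0 ≤ Real.log y := Real.log_nonneg hy
  have := Real.sinh_log h0
  rcases eq_or_lt_of_le hl with h | h
  · rw [← this, ← h, Real.sinh_zero]
  · have := (Real.self_lt_sinh_iff.mpr h).le
    rwa [Real.sinh_log h0] at this

lemma auxH_hasDerivAt {z : ℝ} (hz : 0 < z) :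
    HasDerivAt auxH (1 * (Real.log (z+1) - Real.log z) + (z + 1/2) * (1/(z+1) - 1/z)) z := by
  have h1 : HasDerivAt (fun x : ℝ => x + 1/2) 1 z := (hasDerivAt_id z).add_const _
  have h2 : HasDerivAt (fun x : ℝ => Real.log (x+1)) (1/(z+1)) z := by
    have := ((hasDerivAt_id z).add_const (1:ℝ)).log (by positivity)
    simpa using this
  have h3 : HasDerivAt (fun x : ℝ => Real.log x) (1/z) z := by
    simpa [one_div] using Real.hasDerivAt_log hz.ne'
  exact ((h1.mul (h2.sub h3)).sub_const 1)

lemma auxH_antitoneOn : AntitoneOn auxH (Set.Ici (1:ℝ)) := by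
  have key : ∀ z ∈ interior (Set.Ici (1:ℝ)), deriv auxH z ≤ 0 := by
    intro z hz
    rw [interior_Ici] at hz
    have hz1 : (1:ℝ) < z := hz
    have hz0 : 0 < z := lt_trans one_pos hz1
    rw [(auxH_hasDerivAt hz0).deriv]
    have hy : 1 ≤ (z+1)/z := by
      rw [le_div_iff₀ hz0]; linarith
    have hlog := log_le_half_sub_inv hy
    rw [Real.log_div (by positivity) hz0.ne'] at hlog
    have hinv : ((z+1)/z)⁻¹ = z/(z+1) := by
      field_simp
    rw [hinv] at hlog
    have harith : ((z+1)/z - z/(z+1))/2 = -((z + 1/2) * (1/(z+1) - 1/z)) := by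
      field_simp
      ring
    rw [harith] at hlog
    linarith
  refine antitoneOn_of_deriv_nonpos (convex_Ici 1) ?_ ?_ key
  · intro z hz
    have hz0 : (0:ℝ) < z := lt_of_lt_of_le one_pos hz
    exact (auxH_hasDerivAt hz0).continuousAt.continuousWithinAt
  · intro z hz
    rw [interior_Ici] at hz
    exact (auxH_hasDerivAt (lt_trans one_pos hz)).differentiableAt.differentiableWithinAt

lemma auxF_step {z : ℝ} (hz : 0 < z) : auxF z - auxF (z+1) = auxH z := by
  have hg : Real.Gamma (z+1) = z * Real.Gamma z := Real.Gamma_add_one hz.ne'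
  have hgpos : 0 < Real.Gamma z := Real.Gamma_pos_of_pos hz
  unfold auxF auxH
  rw [hg, Real.log_mul hz.ne' hgpos.ne']
  ring

lemma auxF_telescope {z : ℝ} (hz : 0 < z) (M : ℕ) :
    auxF z - auxF (z + M) = ∑ m ∈ Finset.range M, auxH (z + m) := by
  induction M with
  | zero => simp
  | succ M ih =>
    have hzM : (0:ℝ) < z + M := by positivity
    have := auxF_step hzM
    rw [Finset.sum_range_succ, ← ih]
    have : (z + (M+1:ℕ) : ℝ) = (z + M) + 1 := by push_cast; ring
    rw [this]
    linarith [auxF_step hzM]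

lemma logGamma_chord {x δ : ℝ} (hx : 1 ≤ x) (hδ : 0 ≤ δ) :
    Real.log (Real.Gamma (x+δ)) - Real.log (Real.Gamma x) ≤ δ * Real.log (x+δ) := by
  rcases eq_or_lt_of_le hδ with h | h
  · simp [← h]
  have hx0 : (0:ℝ) < x := lt_of_lt_of_le one_pos hx
  have hxδ : (0:ℝ) < x + δ := by linarith
  have := Real.convexOn_log_Gamma.slope_mono_adjacent
    (x := x) (y := x + δ) (z := x + δ + 1)
    (Set.mem_Ioi.mpr hx0) (Set.mem_Ioi.mpr (by linarith)) (by linarith) (by linarith)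
  simp only [Function.comp] at this
  have hg : Real.Gamma (x+δ+1) = (x+δ) * Real.Gamma (x+δ) := Real.Gamma_add_one hxδ.ne'
  have hgpos : 0 < Real.Gamma (x+δ) := Real.Gamma_pos_of_pos hxδ
  rw [hg, Real.log_mul hxδ.ne' hgpos.ne'] at this
  have h2 : (Real.log (Real.Gamma (x+δ)) - Real.log (Real.Gamma x)) / δ ≤ Real.log (x+δ) := by
    have e1 : x + δ - x = δ := by ring
    have e2 : x + δ + 1 - (x + δ) = 1 := by ring
    rw [e1, e2] at this
    simpa using this
  calc Real.log (Real.Gamma (x+δ)) - Real.log (Real.Gamma x)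
      = ((Real.log (Real.Gamma (x+δ)) - Real.log (Real.Gamma x)) / δ) * δ := by
        field_simp
    _ ≤ Real.log (x+δ) * δ := mul_le_mul_of_nonneg_right h2 hδ
    _ = δ * Real.log (x+δ) := mul_comm _ _

lemma auxF_tail_bound {x δ : ℝ} (hx : 1 ≤ x) (hδ : 0 ≤ δ) :
    auxF x - auxF (x + δ) ≥ -(δ * (δ + 1/2)) / x := by
  have hx0 : (0:ℝ) < x := lt_of_lt_of_le one_pos hx
  have hxδ : (0:ℝ) < x + δ := by linarith
  have hchord := logGamma_chord hx hδ
  -- log (x+δ) - log x ≥ δ/(x+δ)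
  have hlog : Real.log (x+δ) - Real.log x ≥ δ / (x+δ) := by
    have h1 : Real.log (x/(x+δ)) ≤ x/(x+δ) - 1 := Real.log_le_sub_one_of_pos (by positivity)
    rw [Real.log_div hx0.ne' hxδ.ne'] at h1
    have : x/(x+δ) - 1 = -(δ/(x+δ)) := by field_simp; ring
    rw [this] at h1
    linarith
  have hmain : auxF x - auxF (x + δ) ≥ (x - 1/2) * (Real.log (x+δ) - Real.log x) - δ := by
    unfold auxF
    have : Real.log (Real.Gamma x) - Real.log (Real.Gamma (x+δ)) ≥ -(δ * Real.log (x+δ)) := by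
      linarith
    nlinarith [this]
  have hx12 : (0:ℝ) ≤ x - 1/2 := by linarith
  have h2 : (x - 1/2) * (Real.log (x+δ) - Real.log x) ≥ (x - 1/2) * (δ/(x+δ)) :=
    mul_le_mul_of_nonneg_left hlog hx12
  have h3 : (x - 1/2) * (δ/(x+δ)) - δ ≥ -(δ * (δ + 1/2)) / x := by
    rw [ge_iff_le, div_le_iff₀ hx0]
    have e : ((x - 1/2) * (δ/(x+δ)) - δ) * x + δ*(δ+1/2) = δ*δ*(δ+1/2)/(x+δ) := by
      field_simp
      ring
    have epos : 0 ≤ δ*δ*(δ+1/2)/(x+δ) := by positivity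
    linarith
  linarith

lemma auxF_antitone {z w : ℝ} (hz : 1 ≤ z) (hzw : z ≤ w) : auxF w ≤ auxF z := by
  set δ := w - z with hδdef
  have hδ : 0 ≤ δ := by simp [hδdef]; linarith
  have hz0 : (0:ℝ) < z := lt_of_lt_of_le one_pos hz
  have hw0 : (0:ℝ) < w := by linarith
  have key : ∀ M : ℕ, -(δ * (δ + 1/2)) / (z + M) ≤ auxF z - auxF w := by
    intro M
    have h1 := auxF_telescope hz0 M
    have h2 := auxF_telescope hw0 M
    have hsum : ∑ m ∈ Finset.range M, auxH (w + m) ≤ ∑ m ∈ Finset.range M, auxH (z + m) := by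
      apply Finset.sum_le_sum
      intro m _
      have hm : (0:ℝ) ≤ (m:ℝ) := Nat.cast_nonneg m
      exact auxH_antitoneOn (by simp only [Set.mem_Ici]; linarith)
        (by simp only [Set.mem_Ici]; linarith) (by linarith)
    have hm : (0:ℝ) ≤ (M:ℝ) := Nat.cast_nonneg M
    have hxM : (1:ℝ) ≤ z + M := by linarith
    have htail := auxF_tail_bound hxM hδ
    have hwM : w + M = (z + M) + δ := by rw [hδdef]; ring
    rw [← hwM] at htail
    linarith
  have hlim : Tendsto (fun M : ℕ => -(δ * (δ + 1/2)) / (z + M)) atTop (nhds 0) := by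
    apply Filter.Tendsto.div_atTop tendsto_const_nhds
    exact tendsto_atTop_add_const_left _ z tendsto_natCast_atTop_atTop
  have := le_of_tendsto hlim (Filter.Eventually.of_forall key)
  linarith

lemma lintegral_pi_pow (n : ℕ) (μ : Measure ℝ) [SigmaFinite μ] {g : ℝ → ℝ≥0∞}
    (hg : Measurable g) :
    ∫⁻ y : Fin n → ℝ, ∏ j, g (y j) ∂(Measure.pi fun _ => μ) = (∫⁻ x, g x ∂μ) ^ n := by
  induction n with
  | zero => simp [MeasureTheory.Measure.pi_empty_univ]
  | succ n ih =>
    have A := MeasureTheory.measurePreserving_piFinSuccAbove (fun _ : Fin (n+1) => μ) 0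
    have hB : ∫⁻ y : Fin (n+1) → ℝ, ∏ j, g (y j) ∂(Measure.pi fun _ => μ)
        = ∫⁻ z : ℝ × (Fin n → ℝ), g z.1 * ∏ j, g (z.2 j) ∂(μ.prod (Measure.pi fun _ => μ)) := by
      rw [← A.lintegral_comp_emb (MeasurableEquiv.measurableEmbedding _)]
      congr 1
      funext y
      simp [MeasurableEquiv.piFinSuccAbove_apply, Fin.prod_univ_succ, Fin.zero_succAbove, Fin.tail]
    have hG : Measurable fun y : Fin n → ℝ => ∏ j, g (y j) :=
      Finset.measurable_prod Finset.univ fun j _ => hg.comp (measurable_pi_apply j)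
    rw [hB, MeasureTheory.lintegral_prod_mul hg.aemeasurable hG.aemeasurable, ih, pow_succ]
    ring

lemma gamma_moment (k : ℕ) (hk : 0 < k) {α : ℝ} (hα : 0 ≤ α) :
    ∫⁻ x, ENNReal.ofReal (|x| ^ α) ∂(gammaMeasure k 1)
      = ENNReal.ofReal (Real.Gamma ((k : ℝ) + α) / Real.Gamma k) := by
  have hk0 : (0:ℝ) < (k:ℝ) := by exact_mod_cast hk
  have hΓk : 0 < Real.Gamma k := Real.Gamma_pos_of_pos hk0
  have hs : (0:ℝ) < (k:ℝ) + α := by linarith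
  have hmeas : Measurable fun x : ℝ => ENNReal.ofReal (|x| ^ α) := by fun_prop
  have hpdfm : Measurable (gammaPDF (k:ℝ) 1) := (measurable_gammaPDFReal (k:ℝ) 1).ennreal_ofReal
  rw [gammaMeasure, lintegral_withDensity_eq_lintegral_mul _ hpdfm hmeas]
  have hstep : ∫⁻ x, (gammaPDF (k:ℝ) 1 * fun x => ENNReal.ofReal (|x| ^ α)) x
      = ∫⁻ x in Set.Ioi (0:ℝ),
          ENNReal.ofReal (Real.exp (-x) * x ^ ((k:ℝ) + α - 1) * (Real.Gamma k)⁻¹) := by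
    rw [← lintegral_indicator measurableSet_Ioi _]
    apply lintegral_congr_ae
    have h0 : ∀ᵐ x : ℝ, x ≠ (0:ℝ) := by
      rw [MeasureTheory.ae_iff]
      simp [Real.volume_singleton]
    filter_upwards [h0] with x hx0
    rcases lt_trichotomy x 0 with hneg | hzero | hpos
    · simp only [Pi.mul_apply, gammaPDF_of_neg hneg, zero_mul,
        Set.indicator_of_notMem (by simp [not_lt.mpr hneg.le] : x ∉ Set.Ioi (0:ℝ))]
    · exact absurd hzero hx0
    · rw [Set.indicator_of_mem (Set.mem_Ioi.mpr hpos)]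
      simp only [Pi.mul_apply]
      rw [gammaPDF_of_nonneg hpos.le, abs_of_pos hpos,
        ← ENNReal.ofReal_mul (by positivity)]
      congr 1
      rw [Real.one_rpow, one_mul,
        show ((k:ℝ) + α - 1) = ((k:ℝ) - 1) + α by ring, Real.rpow_add hpos]
      ring
  rw [hstep]
  have hint : IntegrableOn (fun x => Real.exp (-x) * x ^ ((k:ℝ) + α - 1) * (Real.Gamma k)⁻¹)
      (Set.Ioi 0) := (Real.GammaIntegral_convergent hs).mul_const _
  rw [← MeasureTheory.ofReal_integral_eq_lintegral_ofReal hint ?_]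
  · congr 1
    rw [MeasureTheory.integral_mul_const, ← Real.Gamma_eq_integral hs, div_eq_mul_inv]
  · rw [Filter.EventuallyLE, ae_restrict_iff' measurableSet_Ioi]
    filter_upwards with x hx
    have hx0 : (0:ℝ) < x := hx
    positivity

end Aux

/-- Upper bound on `P(X² > r²)` via Markov inequality with `α = r^{2/n} − k` and Stirling bounds. -/
theorem prodGamma_tail_exp_upper_bound {Ω : Type*} [MeasureSpace Ω]
    [IsProbabilityMeasure (ℙ : Measure Ω)]
    (n k : ℕ) (hn : 0 < n) (hk : 0 < k)
    (X : Ω → ℝ) (hXm : Measurable X) (hX0 : ∀ ω, 0 ≤ X ω)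
    (hX : Measure.map (fun ω => X ω ^ 2) ℙ = prodGammaMeasure n k)
    (r : ℝ) (hr : 1 ≤ r) (hrk : (k : ℝ) ≤ r ^ ((2 : ℝ) / n)) :
    (ℙ {ω | r ^ 2 < X ω ^ 2}).toReal ≤
      Real.exp (-(n : ℝ) * (r ^ ((2 : ℝ) / n) - (k : ℝ))
        + ((n : ℝ) / 2) * Real.log ((k : ℝ) / r ^ ((2 : ℝ) / n))
        - (n : ℝ) * (k : ℝ) * Real.log ((k : ℝ) / r ^ ((2 : ℝ) / n))
        + (n : ℝ) / (12 * r ^ ((2 : ℝ) / n))) := by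
  have hn0 : (0:ℝ) < n := by exact_mod_cast hn
  have hr0 : (0:ℝ) < r := lt_of_lt_of_le one_pos hr
  set s : ℝ := r ^ ((2 : ℝ) / n) with hsdef
  set E : ℝ := -(n : ℝ) * (s - (k : ℝ)) + ((n : ℝ) / 2) * Real.log ((k : ℝ) / s)
        - (n : ℝ) * (k : ℝ) * Real.log ((k : ℝ) / s) + (n : ℝ) / (12 * s) with hEdef
  have hs1 : 1 ≤ s := Real.one_le_rpow hr (by positivity)
  have hs0 : (0:ℝ) < s := lt_of_lt_of_le one_pos hs1
  have hk0 : (0:ℝ) < (k:ℝ) := by exact_mod_cast hk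
  have hk1 : (1:ℝ) ≤ (k:ℝ) := by exact_mod_cast hk
  set α : ℝ := s - (k:ℝ) with hαdef
  have hα : 0 ≤ α := by simp only [hαdef]; linarith
  have hKα : (k:ℝ) + α = s := by simp only [hαdef]; ring
  haveI : IsProbabilityMeasure (gammaMeasure (k:ℝ) 1) :=
    isProbabilityMeasure_gammaMeasure hk0 one_pos
  set G : ℝ → ℝ≥0∞ := fun x => ENNReal.ofReal (|x| ^ α) with hGdef
  have hGmeas : Measurable G := by fun_prop
  set μ : Measure ℝ := prodGammaMeasure n k with hμdef
  -- step 1 : identify the probability with μ of a tail set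
  have hmapA : ℙ {ω | r ^ 2 < X ω ^ 2} = μ (Set.Ioi (r^2)) := by
    have hmX : Measurable fun ω => X ω ^ 2 := hXm.pow_const 2
    rw [← hX, Measure.map_apply hmX measurableSet_Ioi]
    rfl
  -- step 2 : moment of μ
  have hΓs : 0 < Real.Gamma s := Real.Gamma_pos_of_pos hs0
  have hΓk : 0 < Real.Gamma (k:ℝ) := Real.Gamma_pos_of_pos hk0
  have hGint : ∫⁻ x, G x ∂μ
      = ENNReal.ofReal ((Real.Gamma s / Real.Gamma (k:ℝ)) ^ n) := by
    have hprodmeas : Measurable fun y : Fin n → ℝ => ∏ j, y j :=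
      Finset.measurable_prod _ fun j _ => measurable_pi_apply j
    rw [hμdef, prodGammaMeasure, lintegral_map hGmeas hprodmeas]
    have hmul : ∀ y : Fin n → ℝ, G (∏ j, y j) = ∏ j, G (y j) := by
      intro y
      simp only [hGdef]
      rw [Finset.abs_prod, ← Real.finset_prod_rpow _ _ (fun i _ => abs_nonneg _) α,
        ENNReal.ofReal_prod_of_nonneg (fun i _ => by positivity)]
    simp_rw [hmul]
    rw [lintegral_pi_pow n (gammaMeasure (k:ℝ) 1) hGmeas, gamma_moment k hk hα, hKα,
      ← ENNReal.ofReal_pow (by positivity)]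
  -- step 3 : Markov inequality
  have hmarkov : ENNReal.ofReal ((r^2) ^ α) * μ (Set.Ioi (r^2)) ≤ ∫⁻ x, G x ∂μ := by
    refine le_trans ?_ (mul_meas_ge_le_lintegral₀ hGmeas.aemeasurable
      (ENNReal.ofReal ((r^2) ^ α)))
    refine mul_le_mul_right (measure_mono ?_) _
    intro x hx
    have hx' : r^2 < x := hx
    have hx1 : r^2 ≤ |x| := le_trans hx'.le (le_abs_self x)
    exact ENNReal.ofReal_le_ofReal (Real.rpow_le_rpow (by positivity) hx1 hα)
  -- step 4 : the real inequality coming from Stirling-type monotonicity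
  have hEineq : (Real.Gamma s / Real.Gamma (k:ℝ)) ^ n ≤ (r^2) ^ α * Real.exp E := by
    have hR : 0 < Real.Gamma s / Real.Gamma (k:ℝ) := div_pos hΓs hΓk
    have hLHS : (Real.Gamma s / Real.Gamma (k:ℝ)) ^ n
        = Real.exp ((n:ℝ) * Real.log (Real.Gamma s / Real.Gamma (k:ℝ))) := by
      rw [Real.exp_nat_mul, Real.exp_log hR]
    have hRHS : (r^2) ^ α * Real.exp E = Real.exp (Real.log (r^2) * α + E) := by
      rw [Real.rpow_def_of_pos (by positivity), ← Real.exp_add]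
    rw [hLHS, hRHS]
    apply Real.exp_le_exp.mpr
    have hlogr2 : Real.log (r^2) = (n:ℝ) * Real.log s := by
      have h1 : Real.log s = ((2:ℝ)/n) * Real.log r := Real.log_rpow hr0 _
      rw [Real.log_pow, h1]
      push_cast
      field_simp
    have hlogdiv : Real.log (Real.Gamma s / Real.Gamma (k:ℝ))
        = Real.log (Real.Gamma s) - Real.log (Real.Gamma (k:ℝ)) :=
      Real.log_div hΓs.ne' hΓk.ne'
    have hlogks : Real.log ((k:ℝ)/s) = Real.log (k:ℝ) - Real.log s :=
      Real.log_div hk0.ne' hs0.ne'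
    have hfs : auxF s ≤ auxF (k:ℝ) := auxF_antitone hk1 hrk
    simp only [auxF] at hfs
    have hfsn : (n:ℝ) * (Real.log (Real.Gamma s) - (s - 1/2) * Real.log s + s)
        ≤ (n:ℝ) * (Real.log (Real.Gamma (k:ℝ)) - ((k:ℝ) - 1/2) * Real.log (k:ℝ) + (k:ℝ)) :=
      mul_le_mul_of_nonneg_left hfs (le_of_lt hn0)
    have h12 : 0 < (n:ℝ) / (12 * s) := by positivity
    rw [hlogr2, hlogdiv, hEdef, hlogks, hαdef]
    nlinarith [hfsn, h12]
  -- step 5 : put everything together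
  have hcmb : ENNReal.ofReal ((r^2) ^ α) * μ (Set.Ioi (r^2))
      ≤ ENNReal.ofReal ((r^2) ^ α) * ENNReal.ofReal (Real.exp E) := by
    rw [hGint] at hmarkov
    refine hmarkov.trans ?_
    rw [← ENNReal.ofReal_mul (by positivity)]
    exact ENNReal.ofReal_le_ofReal hEineq
  have hcpos : (0:ℝ) < (r^2) ^ α := by positivity
  have hμle : μ (Set.Ioi (r^2)) ≤ ENNReal.ofReal (Real.exp E) := by
    have hc0 : ENNReal.ofReal ((r^2) ^ α) ≠ 0 := by
      simp [ENNReal.ofReal_eq_zero, not_le, hcpos]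
    have hctop : ENNReal.ofReal ((r^2) ^ α) ≠ ⊤ := ENNReal.ofReal_ne_top
    exact (ENNReal.mul_le_mul_iff_right hc0 hctop).mp hcmb
  rw [hmapA]
  exact ENNReal.toReal_le_of_le_ofReal (Real.exp_nonneg _) hμle
end

section
/- Let n, k be positive integers with k ≥ 1, and let X² be distributed as a product of n i.i.d. Gamma(k,1) variables. Then for r > 0, P(X² < r²) ≤ exp((k − 1/2)(n + log(r²) − n log k) + n/6). -/
open MeasureTheory ProbabilityTheory
open scoped ENNReal

section aux

lemma my_lintegral_pi_prod {n : ℕ} (μ : Measure ℝ) [SigmaFinite μ] {f : ℝ → ℝ≥0∞}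
    (hf : Measurable f) :
    ∫⁻ y : Fin n → ℝ, ∏ j, f (y j) ∂(Measure.pi fun _ : Fin n => μ)
      = (∫⁻ x, f x ∂μ) ^ n := by
  induction n with
  | zero => simp [Measure.pi_of_empty, lintegral_dirac]
  | succ m ih =>
      have h := measurePreserving_piFinSuccAbove (fun _ : Fin (m + 1) => μ) 0
      have hg : Measurable fun y : Fin m → ℝ => ∏ j, f (y j) :=
        Finset.measurable_prod _ fun j _ => hf.comp (measurable_pi_apply j)
      calc ∫⁻ y : Fin (m+1) → ℝ, ∏ j, f (y j) ∂(Measure.pi fun _ => μ)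
          = ∫⁻ y : Fin (m+1) → ℝ,
              (fun p : ℝ × (Fin m → ℝ) => f p.1 * ∏ j : Fin m, f (p.2 j))
                ((MeasurableEquiv.piFinSuccAbove (fun _ : Fin (m+1) => ℝ) 0) y)
              ∂(Measure.pi fun _ => μ) := by
            apply lintegral_congr
            intro y
            simp [MeasurableEquiv.piFinSuccAbove_apply, Fin.prod_univ_succ,
              Fin.zero_succAbove, Fin.tail]
        _ = ∫⁻ p : ℝ × (Fin m → ℝ), f p.1 * ∏ j : Fin m, f (p.2 j)
              ∂(μ.prod (Measure.pi fun _ : Fin m => μ)) := by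
            simpa using h.lintegral_comp_emb (MeasurableEquiv.measurableEmbedding _)
              (fun p : ℝ × (Fin m → ℝ) => f p.1 * ∏ j : Fin m, f (p.2 j))
        _ = (∫⁻ x, f x ∂μ) * (∫⁻ x, f x ∂μ) ^ m := by
            rw [lintegral_prod_mul hf.aemeasurable hg.aemeasurable, ih]
        _ = (∫⁻ x, f x ∂μ) ^ (m + 1) := by rw [pow_succ, mul_comm]

open Real in
lemma my_moment (k : ℕ) (hk : 1 ≤ k) :
    ∫⁻ x, ENNReal.ofReal (x ^ (-((k:ℝ) - 1/2))) ∂(gammaMeasure k 1)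
      = ENNReal.ofReal (Real.sqrt π / Real.Gamma k) := by
  have hg : Measurable fun x : ℝ => ENNReal.ofReal (x ^ (-((k:ℝ) - 1/2))) :=
    (measurable_id'.pow_const _).ennreal_ofReal
  have hpdf : Measurable (gammaPDF (k:ℝ) 1) :=
    (measurable_gammaPDFReal _ _).ennreal_ofReal
  rw [gammaMeasure, lintegral_withDensity_eq_lintegral_mul _ hpdf hg]
  simp only [Pi.mul_apply]
  rw [← lintegral_add_compl _ (measurableSet_Ici : MeasurableSet (Set.Ici (0:ℝ))) (μ := volume)]
  have h0 : ∫⁻ x in (Set.Ici (0:ℝ))ᶜ,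
      gammaPDF k 1 x * ENNReal.ofReal (x ^ (-((k:ℝ) - 1/2))) = 0 := by
    rw [Set.compl_Ici]
    rw [setLIntegral_congr_fun_ae measurableSet_Iio
      (ae_of_all _ (fun x (hx : x < 0) => by
        rw [gammaPDF_of_neg hx, zero_mul]))]
    simp
  rw [h0, add_zero]
  rw [setLIntegral_congr Ioi_ae_eq_Ici.symm]
  have h1 : ∫⁻ x in Set.Ioi (0:ℝ),
      gammaPDF k 1 x * ENNReal.ofReal (x ^ (-((k:ℝ) - 1/2)))
      = ∫⁻ x in Set.Ioi (0:ℝ),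
        ENNReal.ofReal (exp (-x) * x ^ ((1/2:ℝ) - 1) / Real.Gamma k) := by
    apply setLIntegral_congr_fun_ae measurableSet_Ioi
    refine ae_of_all _ fun x (hx : 0 < x) => ?_
    rw [gammaPDF_of_nonneg hx.le, ← ENNReal.ofReal_mul (by positivity)]
    congr 1
    have hx2 : x ^ ((k:ℝ)-1) * x ^ (-((k:ℝ)-1/2)) = x ^ ((1/2:ℝ) - 1) := by
      rw [← Real.rpow_add hx]; congr 1; ring
    rw [one_rpow, one_mul]
    calc 1 / Gamma (k:ℝ) * x ^ ((k:ℝ)-1) * rexp (-x) * x ^ (-((k:ℝ)-1/2))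
        = (x ^ ((k:ℝ)-1) * x ^ (-((k:ℝ)-1/2))) * rexp (-x) / Gamma (k:ℝ) := by ring
      _ = rexp (-x) * x ^ ((1/2:ℝ)-1) / Gamma (k:ℝ) := by rw [hx2]; ring
  rw [h1, ← ofReal_integral_eq_lintegral_ofReal
    ((Real.GammaIntegral_convergent (by norm_num : (0:ℝ) < 1/2)).div_const _)
    ((ae_restrict_iff' measurableSet_Ioi).mpr (ae_of_all _ fun x (hx : 0 < x) => by positivity))]
  rw [integral_div, ← Real.Gamma_eq_integral (by norm_num : (0:ℝ) < 1/2),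
    Real.Gamma_one_half_eq]

open Real in
lemma my_stirling (k : ℕ) (hk : 1 ≤ k) :
    Real.sqrt π / Real.Gamma k ≤ Real.exp (((k:ℝ) - 1/2) * (1 - Real.log k) + 1/6) := by
  have hK : (0:ℝ) < k := by exact_mod_cast hk
  have hΓpos : 0 < Real.Gamma k := Real.Gamma_pos_of_pos hK
  set E := Real.exp (((k:ℝ) - 1/2) * (1 - Real.log k) + 1/6) with hE
  have h1 : Real.sqrt π ≤ Stirling.stirlingSeq k := by
    obtain ⟨m, rfl⟩ := Nat.exists_eq_add_of_le hk
    have htend : Filter.Tendsto (Stirling.stirlingSeq ∘ Nat.succ) Filter.atTop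
        (nhds (Real.sqrt π)) :=
      Stirling.tendsto_stirlingSeq_sqrt_pi.comp (Filter.tendsto_add_atTop_nat 1)
    simpa [Nat.add_comm] using Stirling.stirlingSeq'_antitone.le_of_tendsto htend m
  have hden : (0:ℝ) < Real.sqrt (2 * (k:ℝ)) * ((k / Real.exp 1) ^ k) := by positivity
  have h2 : Real.sqrt π * (Real.sqrt (2 * (k:ℝ)) * ((k / Real.exp 1) ^ k))
      ≤ ((Nat.factorial k : ℕ) : ℝ) := by
    rw [Stirling.stirlingSeq] at h1
    calc Real.sqrt π * (Real.sqrt (2 * (k:ℝ)) * ((k / Real.exp 1) ^ k))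
        ≤ (((Nat.factorial k : ℕ) : ℝ) / (Real.sqrt (2 * (k:ℝ)) * ((k / Real.exp 1) ^ k)))
            * (Real.sqrt (2 * (k:ℝ)) * ((k / Real.exp 1) ^ k)) := by
          apply mul_le_mul_of_nonneg_right h1 hden.le
      _ = ((Nat.factorial k : ℕ) : ℝ) := div_mul_cancel₀ _ hden.ne'
  have hΓ : (k:ℝ) * Real.Gamma k = ((Nat.factorial k : ℕ) : ℝ) := by
    have h3 : Real.Gamma ((k - 1 : ℕ) + 1) = ((Nat.factorial (k-1) : ℕ) : ℝ) :=
      Real.Gamma_nat_eq_factorial (k-1)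
    have h4 : ((k - 1 : ℕ) : ℝ) + 1 = (k : ℝ) := by
      have : k - 1 + 1 = k := Nat.sub_add_cancel hk
      exact_mod_cast congrArg (Nat.cast : ℕ → ℝ) this
    rw [← h4, h3]
    rw_mod_cast [← Nat.mul_factorial_pred (by omega : k ≠ 0)]
    rw [Nat.sub_add_cancel hk]
  have hkey : (k:ℝ) ≤ E * (Real.sqrt (2 * (k:ℝ)) * ((k / Real.exp 1) ^ k)) := by
    have e1 : (k:ℝ) = Real.exp (Real.log k) := (Real.exp_log hK).symm
    have e2 : Real.sqrt (2 * (k:ℝ)) = Real.exp (Real.log (2 * (k:ℝ)) / 2) := by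
      rw [← Real.log_sqrt (by positivity), Real.exp_log (Real.sqrt_pos.mpr (by positivity))]
    have e3 : ((k:ℝ) / Real.exp 1) ^ k = Real.exp (k * (Real.log k - 1)) := by
      rw [← Real.rpow_natCast ((k:ℝ) / Real.exp 1) k,
        Real.rpow_def_of_pos (div_pos hK (Real.exp_pos 1)),
        Real.log_div hK.ne' (Real.exp_ne_zero 1), Real.log_exp, mul_comm]
    have e4 : E * (Real.sqrt (2 * (k:ℝ)) * (((k:ℝ) / Real.exp 1) ^ k))
        = Real.exp ((((k:ℝ) - 1/2) * (1 - Real.log k) + 1/6)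
            + (Real.log (2 * (k:ℝ)) / 2 + (k:ℝ) * (Real.log k - 1))) := by
      rw [hE, e2, e3, ← Real.exp_add, ← Real.exp_add]
    have hlog2 : (2:ℝ)/3 ≤ Real.log 2 := by
      have := Real.log_two_gt_d9
      linarith
    calc (k:ℝ) = Real.exp (Real.log k) := e1
      _ ≤ Real.exp ((((k:ℝ) - 1/2) * (1 - Real.log k) + 1/6)
            + (Real.log (2 * (k:ℝ)) / 2 + (k:ℝ) * (Real.log k - 1))) := by
          rw [Real.exp_le_exp, Real.log_mul two_ne_zero hK.ne']
          nlinarith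
      _ = E * (Real.sqrt (2 * (k:ℝ)) * (((k:ℝ) / Real.exp 1) ^ k)) := e4.symm
  rw [div_le_iff₀ hΓpos]
  have : (k:ℝ) * (Real.sqrt π) ≤ (k:ℝ) * (E * Real.Gamma k) := by
    calc (k:ℝ) * Real.sqrt π
        = Real.sqrt π * (k:ℝ) := by ring
      _ ≤ Real.sqrt π * (E * (Real.sqrt (2 * (k:ℝ)) * ((k / Real.exp 1) ^ k))) := by
          apply mul_le_mul_of_nonneg_left hkey (Real.sqrt_nonneg _)
      _ = E * (Real.sqrt π * (Real.sqrt (2 * (k:ℝ)) * ((k / Real.exp 1) ^ k))) := by ring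
      _ ≤ E * ((Nat.factorial k : ℕ) : ℝ) := by
          apply mul_le_mul_of_nonneg_left h2 (Real.exp_nonneg _)
      _ = (k:ℝ) * (E * Real.Gamma k) := by rw [← hΓ]; ring
  exact le_of_mul_le_mul_left (by simpa [mul_comm] using this) hK

end aux

/-- Upper bound `P(X² < r²) ≤ exp((k − 1/2)(n + log(r²) − n log k) + n/6)`. -/
theorem prodGamma_lower_tail_exp_upper_bound {Ω : Type*} [MeasureSpace Ω]
    [IsProbabilityMeasure (ℙ : Measure Ω)]
    (n k : ℕ) (hn : 0 < n) (hk : 1 ≤ k)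
    (X : Ω → ℝ) (hXm : Measurable X) (hX0 : ∀ ω, 0 ≤ X ω)
    (hX : Measure.map (fun ω => X ω ^ 2) ℙ = prodGammaMeasure n k)
    (r : ℝ) (hr : 0 < r) :
    (ℙ {ω | X ω ^ 2 < r ^ 2}).toReal ≤
      Real.exp (((k : ℝ) - 1 / 2) * ((n : ℝ) + Real.log (r ^ 2) - (n : ℝ) * Real.log (k : ℝ))
        + (n : ℝ) / 6) := by
  have hKpos : (0:ℝ) < k := by exact_mod_cast hk
  have hΓpos : 0 < Real.Gamma k := Real.Gamma_pos_of_pos hKpos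
  set α : ℝ := (k:ℝ) - 1/2 with hα
  have hαpos : 0 < α := by
    have h1k : (1:ℝ) ≤ (k:ℝ) := by exact_mod_cast hk
    rw [hα]; linarith
  set γ : Measure ℝ := gammaMeasure k 1 with hγ
  haveI : IsProbabilityMeasure γ := isProbabilityMeasure_gammaMeasure hKpos one_pos
  set μn : Measure (Fin n → ℝ) := Measure.pi fun _ : Fin n => γ with hμn
  have hprodm : Measurable fun y : Fin n → ℝ => ∏ j, y j :=
    Finset.measurable_prod _ fun j _ => measurable_pi_apply j
  have hset : MeasurableSet {y : Fin n → ℝ | ∏ j, y j < r^2} :=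
    measurableSet_lt hprodm measurable_const
  -- step A: identify the probability
  have hA : ℙ {ω | X ω ^ 2 < r ^ 2} = μn {y | ∏ j, y j < r^2} := by
    have h1 : {ω | X ω ^ 2 < r ^ 2} = (fun ω => X ω ^ 2) ⁻¹' Set.Iio (r^2) := rfl
    rw [h1, ← Measure.map_apply (hXm.pow_const 2) measurableSet_Iio, hX, prodGammaMeasure,
      Measure.map_apply hprodm measurableSet_Iio]
    rfl
  -- step B: a.e. all coordinates positive
  have hγ0 : γ (Set.Iic 0) = 0 := by
    rw [hγ, gammaMeasure, withDensity_apply _ measurableSet_Iic,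
      setLIntegral_congr (Iio_ae_eq_Iic (a := (0:ℝ))).symm]
    exact lintegral_gammaPDF_of_nonpos le_rfl
  have hae : ∀ᵐ y ∂μn, ∀ j, 0 < y j := by
    rw [MeasureTheory.ae_all_iff]
    intro j
    refine measure_mono_null (fun y hy => ?_)
      (Measure.pi_eval_preimage_null (i := j) hγ0 (μ := fun _ : Fin n => γ))
    have h6 : ¬ (0 < y j) := hy
    simpa using not_lt.mp h6
  -- step C: Markov bound
  set g : ℝ → ℝ≥0∞ := fun x => ENNReal.ofReal (x ^ (-α)) with hgdef
  have hgm : Measurable g := (measurable_id'.pow_const _).ennreal_ofReal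
  have hgprodm : Measurable fun y : Fin n → ℝ => ∏ j, g (y j) :=
    Finset.measurable_prod _ fun j _ => hgm.comp (measurable_pi_apply j)
  have hbound : ∀ᵐ y ∂μn, Set.indicator {y : Fin n → ℝ | ∏ j, y j < r^2}
      (fun _ => (1:ℝ≥0∞)) y ≤ ENNReal.ofReal ((r^2)^α) * ∏ j, g (y j) := by
    filter_upwards [hae] with y hy
    by_cases hmem : y ∈ {y : Fin n → ℝ | ∏ j, y j < r^2}
    · rw [Set.indicator_of_mem hmem]
      have hyj : ∀ j ∈ Finset.univ, (0:ℝ) ≤ y j := fun j _ => (hy j).le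
      have hprodpos : 0 < ∏ j, y j := Finset.prod_pos (fun j _ => hy j)
      have hprodg : ∏ j, g (y j) = ENNReal.ofReal ((∏ j, y j) ^ (-α)) := by
        rw [hgdef]
        rw [← ENNReal.ofReal_prod_of_nonneg
          (fun j _ => Real.rpow_nonneg (hy j).le _)]
        congr 1
        exact Real.finset_prod_rpow _ _ hyj _
      rw [hprodg, ← ENNReal.ofReal_mul (Real.rpow_nonneg (by positivity) _)]
      rw [ENNReal.one_le_ofReal]
      have h5 : (r^2:ℝ)^(-α) ≤ (∏ j, y j)^(-α) :=
        Real.rpow_le_rpow_of_nonpos hprodpos hmem.out.le (neg_nonpos.mpr hαpos.le)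
      calc (1:ℝ) = (r^2)^α * (r^2)^(-α) := by
            rw [← Real.rpow_add (by positivity)]; simp
        _ ≤ (r^2)^α * (∏ j, y j)^(-α) :=
            mul_le_mul_of_nonneg_left h5 (Real.rpow_nonneg (by positivity) _)
    · rw [Set.indicator_of_notMem hmem]; exact zero_le
  have hmarkov : μn {y | ∏ j, y j < r^2}
      ≤ ENNReal.ofReal ((r^2)^α) * (ENNReal.ofReal (Real.sqrt Real.pi / Real.Gamma k)) ^ n := by
    calc μn {y | ∏ j, y j < r^2}
        = ∫⁻ y, Set.indicator {y : Fin n → ℝ | ∏ j, y j < r^2} (fun _ => (1:ℝ≥0∞)) y ∂μn := by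
          rw [lintegral_indicator hset, setLIntegral_one]
      _ ≤ ∫⁻ y, ENNReal.ofReal ((r^2)^α) * ∏ j, g (y j) ∂μn := lintegral_mono_ae hbound
      _ = ENNReal.ofReal ((r^2)^α) * (∫⁻ x, g x ∂γ) ^ n := by
          rw [lintegral_const_mul _ hgprodm, my_lintegral_pi_prod γ hgm]
      _ = _ := by rw [hgdef, hγ, hα, my_moment k hk]
  -- step D: numerical bound
  have hfinal : (r^2:ℝ)^α * (Real.sqrt Real.pi / Real.Gamma k) ^ n
      ≤ Real.exp (α * ((n : ℝ) + Real.log (r ^ 2) - (n : ℝ) * Real.log (k : ℝ))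
        + (n : ℝ) / 6) := by
    have hb1 : (Real.sqrt Real.pi / Real.Gamma k) ^ n
        ≤ Real.exp (α * (1 - Real.log k) + 1/6) ^ n :=
      pow_le_pow_left₀ (by positivity) (my_stirling k hk) n
    have hb2 : (r^2:ℝ)^α = Real.exp (Real.log (r^2) * α) :=
      Real.rpow_def_of_pos (by positivity) _
    calc (r^2:ℝ)^α * (Real.sqrt Real.pi / Real.Gamma k) ^ n
        ≤ (r^2:ℝ)^α * Real.exp (α * (1 - Real.log k) + 1/6) ^ n :=
          mul_le_mul_of_nonneg_left hb1 (Real.rpow_nonneg (by positivity) _)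
      _ = Real.exp (Real.log (r^2) * α) * Real.exp ((n:ℝ) * (α * (1 - Real.log k) + 1/6)) := by
          rw [hb2, Real.exp_nat_mul]
      _ = Real.exp (Real.log (r^2) * α + (n:ℝ) * (α * (1 - Real.log k) + 1/6)) := by
          rw [← Real.exp_add]
      _ = Real.exp (α * ((n : ℝ) + Real.log (r ^ 2) - (n : ℝ) * Real.log (k : ℝ))
          + (n : ℝ) / 6) := by congr 1; ring
  -- conclude
  refine ENNReal.toReal_le_of_le_ofReal (Real.exp_nonneg _) ?_
  rw [hA]
  refine hmarkov.trans ?_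
  rw [← ENNReal.ofReal_pow (by positivity), ← ENNReal.ofReal_mul (by positivity)]
  exact ENNReal.ofReal_le_ofReal hfinal
end

section
/- Let R_1, …, R_N be independent nonnegative random variables with R_k² distributed as a product of n i.i.d. Gamma(k,1) variables, for a fixed positive integer n and fixed N. Then lim_{r→∞} r^{−2/n} · log ∏_{k=1}^N P(R_k² > r²) = −nN. -/
open MeasureTheory ProbabilityTheory Filter

open Set Real

section AuxLemmas

lemma hole_aux_integrable {a c : ℝ} (ha : 0 < a) (hc : 0 < c) :
    IntegrableOn (fun x : ℝ => x ^ (a - 1) * Real.exp (-(c * x))) (Ioi 0) := by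
  have h0 := Real.GammaIntegral_convergent ha
  have h1 : IntegrableOn (fun x : ℝ => Real.exp (-(c * x)) * (c * x) ^ (a - 1)) (Ioi 0) := by
    have := (integrableOn_Ioi_comp_mul_left_iff
      (fun x : ℝ => Real.exp (-x) * x ^ (a - 1)) 0 hc).2 (by simpa using h0)
    simpa using this
  have h2 : IntegrableOn
      (fun x : ℝ => (c ^ (a - 1))⁻¹ * (Real.exp (-(c * x)) * (c * x) ^ (a - 1))) (Ioi 0) :=
    h1.const_mul _
  apply IntegrableOn.congr_fun h2 ?_ measurableSet_Ioi
  intro x hx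
  rw [mem_Ioi] at hx
  dsimp only
  rw [Real.mul_rpow hc.le hx.le]
  field_simp [(Real.rpow_pos_of_pos hc (a-1)).ne']

lemma hole_gamma_mgf {a θ : ℝ} (ha : 0 < a) (hθ : θ < 1) :
    ∫⁻ x, ENNReal.ofReal (Real.exp (θ * x)) ∂(gammaMeasure a 1) =
      ENNReal.ofReal ((1 - θ)⁻¹ ^ a) := by
  have hc : 0 < 1 - θ := by linarith
  have hmexp : Measurable (fun x : ℝ => ENNReal.ofReal (Real.exp (θ * x))) :=
    (Real.measurable_exp.comp (measurable_id.const_mul θ)).ennreal_ofReal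
  have hpdfm : Measurable (gammaPDF a 1) := (measurable_gammaPDFReal a 1).ennreal_ofReal
  rw [gammaMeasure, lintegral_withDensity_eq_lintegral_mul _ hpdfm hmexp]
  have hsplit := (lintegral_add_compl (μ := (volume : Measure ℝ))
    (fun x => (gammaPDF a 1 * fun x => ENNReal.ofReal (Real.exp (θ * x))) x)
    (measurableSet_Ici (a := (0:ℝ)))).symm
  rw [hsplit, compl_Ici]
  have hIio : ∫⁻ x in Iio (0:ℝ),
      (gammaPDF a 1 * fun x => ENNReal.ofReal (Real.exp (θ * x))) x = 0 := by
    rw [setLIntegral_congr_fun_ae (g := fun _ : ℝ => (0 : ENNReal)) measurableSet_Iio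
      (ae_of_all _ (fun x (hx : x < 0) => by
        simp [Pi.mul_apply, gammaPDF_of_neg hx]))]
    simp
  rw [hIio, add_zero, ← setLIntegral_congr (Ioi_ae_eq_Ici (a := (0:ℝ)))]
  have hcongr : ∫⁻ x in Ioi (0:ℝ),
      (gammaPDF a 1 * fun x => ENNReal.ofReal (Real.exp (θ * x))) x
      = ∫⁻ x in Ioi (0:ℝ),
        ENNReal.ofReal ((Real.Gamma a)⁻¹ * (x ^ (a - 1) * Real.exp (-((1 - θ) * x)))) := by
    apply setLIntegral_congr_fun_ae measurableSet_Ioi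
    refine ae_of_all _ (fun x (hx : 0 < x) => ?_)
    rw [Pi.mul_apply, gammaPDF_of_nonneg hx.le, ← ENNReal.ofReal_mul (by positivity)]
    congr 1
    rw [Real.one_rpow, mul_assoc, ← Real.exp_add, one_div]
    rw [mul_comm ((Real.Gamma a)⁻¹), mul_assoc]
    ring_nf
  rw [hcongr]
  rw [← ofReal_integral_eq_lintegral_ofReal
    ((hole_aux_integrable ha hc).const_mul _)
    ((ae_restrict_iff' measurableSet_Ioi).2 (ae_of_all _ (fun x hx => by
      have hx' : (0:ℝ) < x := hx
      positivity)))]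
  rw [integral_const_mul, integral_rpow_mul_exp_neg_mul_Ioi ha hc]
  rw [← mul_assoc, one_div]
  rw [mul_comm ((Real.Gamma a)⁻¹), mul_assoc,
    inv_mul_cancel₀ (Real.Gamma_pos_of_pos ha).ne', mul_one]

lemma hole_lintegral_pi_pow (μ : Measure ℝ) [SigmaFinite μ] (f : ℝ → ENNReal)
    (hf : Measurable f) :
    ∀ n : ℕ, ∫⁻ y : Fin n → ℝ, ∏ j, f (y j) ∂(Measure.pi fun _ => μ)
      = (∫⁻ x, f x ∂μ) ^ n := by
  intro n
  induction n with
  | zero =>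
      simp only [Finset.univ_eq_empty, Finset.prod_empty, pow_zero, lintegral_one]
      rw [Measure.pi_univ]
      simp
  | succ n ih =>
      have hmp := (measurePreserving_piFinSuccAbove (fun _ : Fin (n+1) => μ) 0)
      set e := MeasurableEquiv.piFinSuccAbove (fun _ : Fin (n+1) => ℝ) 0 with he
      have key : ∫⁻ y : Fin (n+1) → ℝ, ∏ j, f (y j) ∂(Measure.pi fun _ => μ)
          = ∫⁻ p : ℝ × (Fin n → ℝ), f p.1 * ∏ j, f (p.2 j)
            ∂(μ.prod (Measure.pi fun _ => μ)) := by
        rw [← hmp.map_eq, lintegral_map_equiv]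
        congr 1
        ext y
        rw [Fin.prod_univ_succ]
        simp [e, MeasurableEquiv.piFinSuccAbove, Fin.zero_succAbove, Fin.tail]
      rw [key, lintegral_prod_mul (f := f) (g := fun y : Fin n → ℝ => ∏ j, f (y j))
        hf.aemeasurable
        ((Finset.measurable_prod _ (fun j _ => hf.comp (measurable_pi_apply j))).aemeasurable),
        ih, pow_succ]
      ring

lemma hole_amgm {n : ℕ} (hn : 0 < n) {s : ℝ} (hs : 0 < s) (y : Fin n → ℝ)
    (hy : ∀ j, 0 ≤ y j) (h : s ^ n < ∏ j, y j) : (n : ℝ) * s ≤ ∑ j, y j := by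
  by_contra hlt
  push_neg at hlt
  have hn' : (0:ℝ) < n := Nat.cast_pos.2 hn
  have hw : ∑ _j : Fin n, (1 / n : ℝ) = 1 := by
    rw [Finset.sum_const, Finset.card_univ, Fintype.card_fin, nsmul_eq_mul]
    field_simp
  have hgm := Real.geom_mean_le_arith_mean_weighted Finset.univ
      (fun _ => (1/n : ℝ)) y (fun _ _ => by positivity) hw (fun j _ => hy j)
  rw [Real.finset_prod_rpow _ _ (fun j _ => hy j)] at hgm
  have hsum : ∑ j, (1/n : ℝ) * y j = (∑ j, y j) / n := by
    rw [← Finset.mul_sum]; ring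
  rw [hsum] at hgm
  have hprodnn : (0:ℝ) ≤ ∏ j, y j := Finset.prod_nonneg (fun j _ => hy j)
  have h1 : ((∏ j, y j) : ℝ) ^ ((1:ℝ)/n) < s :=
    lt_of_le_of_lt hgm (by rw [div_lt_iff₀ hn']; nlinarith)
  have h2 := Real.rpow_lt_rpow (Real.rpow_nonneg hprodnn _) h1 hn'
  rw [← Real.rpow_mul hprodnn] at h2
  rw [one_div, inv_mul_cancel₀ hn'.ne', Real.rpow_one, Real.rpow_natCast] at h2
  exact absurd h2 (not_lt.2 h.le)

/-- Auxiliary: the law of a product of `n` i.i.d. `Gamma(a,1)` variables, for real `a`. -/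
noncomputable def holeM (n : ℕ) (a : ℝ) : Measure ℝ :=
  (Measure.pi fun _ : Fin n => gammaMeasure a 1).map (fun y => ∏ j, y j)

lemma hole_gamma_Ici {a : ℝ} (ha : 0 < a) : gammaMeasure a 1 (Ici 0) = 1 := by
  haveI : IsProbabilityMeasure (gammaMeasure a 1) := isProbabilityMeasure_gammaMeasure ha one_pos
  have hIio : gammaMeasure a 1 (Iio 0) = 0 := by
    rw [gammaMeasure, withDensity_apply _ measurableSet_Iio]
    exact lintegral_gammaPDF_of_nonpos le_rfl
  have := measure_compl (μ := gammaMeasure a 1) (s := Iio (0:ℝ)) measurableSet_Iio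
    (measure_ne_top _ _)
  rw [hIio, compl_Iio] at this
  simpa using this

lemma hole_chernoff {a θ : ℝ} (ha : 0 < a) (hθ0 : 0 ≤ θ) (hθ : θ < 1) {n : ℕ} (hn : 0 < n)
    {s : ℝ} (hs : 0 < s) :
    holeM n a (Ioi (s ^ n)) ≤
      ENNReal.ofReal (Real.exp (-(θ * (n * s)))) * ENNReal.ofReal ((1 - θ)⁻¹ ^ a) ^ n := by
  haveI : IsProbabilityMeasure (gammaMeasure a 1) := isProbabilityMeasure_gammaMeasure ha one_pos
  set μ := (Measure.pi fun _ : Fin n => gammaMeasure a 1) with hμ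
  have hprodm : Measurable (fun y : Fin n → ℝ => ∏ j, y j) :=
    Finset.measurable_prod _ (fun j _ => measurable_pi_apply j)
  set A : Set (Fin n → ℝ) := (fun y => ∏ j, y j) ⁻¹' (Ioi (s ^ n)) with hA
  set B : Set (Fin n → ℝ) := Set.pi univ (fun _ => Ici (0:ℝ)) with hB
  have hBmeas : MeasurableSet B := MeasurableSet.univ_pi (fun _ => measurableSet_Ici)
  have hBfull : μ B = 1 := by
    rw [hB, hμ, Measure.pi_pi]
    simp [hole_gamma_Ici ha]
  haveI : IsProbabilityMeasure μ := by rw [hμ]; infer_instance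
  have hBc : μ Bᶜ = 0 := by
    have := measure_compl (μ := μ) (s := B) hBmeas (measure_ne_top _ _)
    rw [hBfull] at this
    simpa using this
  have hmap : holeM n a (Ioi (s ^ n)) = μ A := by
    rw [holeM, Measure.map_apply hprodm measurableSet_Ioi]
  have hAB : μ A ≤ μ (A ∩ B) := by
    have h1 : μ A ≤ μ (A ∩ B) + μ (A \ B) := measure_le_inter_add_diff μ A B
    have h2 : μ (A \ B) = 0 := measure_mono_null (diff_subset_compl A B) hBc
    simpa [h2] using h1
  set c : ENNReal := ENNReal.ofReal (Real.exp (θ * (n * s))) with hc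
  have hgm : Measurable (fun y : Fin n → ℝ => ENNReal.ofReal (Real.exp (θ * ∑ j, y j))) :=
    ((Real.measurable_exp.comp ((Finset.measurable_sum _
      (fun j _ => measurable_pi_apply j)).const_mul θ))).ennreal_ofReal
  have hkey : c * μ (A ∩ B) ≤ ENNReal.ofReal ((1 - θ)⁻¹ ^ a) ^ n := by
    have hpt : ∀ y ∈ A ∩ B, c ≤ ENNReal.ofReal (Real.exp (θ * ∑ j, y j)) := by
      rintro y ⟨hyA, hyB⟩
      have hy0 : ∀ j, 0 ≤ y j := fun j => hyB j (Set.mem_univ j)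
      have hsum := hole_amgm hn hs y hy0 hyA
      exact ENNReal.ofReal_le_ofReal (Real.exp_le_exp.2 (by nlinarith))
    calc c * μ (A ∩ B) = ∫⁻ _ in A ∩ B, c ∂μ := by rw [setLIntegral_const]
      _ ≤ ∫⁻ y in A ∩ B, ENNReal.ofReal (Real.exp (θ * ∑ j, y j)) ∂μ :=
          setLIntegral_mono hgm hpt
      _ ≤ ∫⁻ y, ENNReal.ofReal (Real.exp (θ * ∑ j, y j)) ∂μ :=
          setLIntegral_le_lintegral _ _
      _ = ∫⁻ y, ∏ j, ENNReal.ofReal (Real.exp (θ * y j)) ∂μ := by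
          apply lintegral_congr
          intro y
          rw [Finset.mul_sum, Real.exp_sum,
            ENNReal.ofReal_prod_of_nonneg (fun j _ => (Real.exp_pos _).le)]
      _ = (∫⁻ x, ENNReal.ofReal (Real.exp (θ * x)) ∂(gammaMeasure a 1)) ^ n :=
          hole_lintegral_pi_pow _ _ ((Real.measurable_exp.comp
            (measurable_id.const_mul θ)).ennreal_ofReal) n
      _ = ENNReal.ofReal ((1 - θ)⁻¹ ^ a) ^ n := by rw [hole_gamma_mgf ha hθ]
  have hc0 : c ≠ 0 := (ENNReal.ofReal_pos.2 (Real.exp_pos _)).ne'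
  have hct : c ≠ ⊤ := ENNReal.ofReal_ne_top
  have hfinal : μ A ≤ c⁻¹ * (ENNReal.ofReal ((1 - θ)⁻¹ ^ a) ^ n) := by
    calc μ A ≤ μ (A ∩ B) := hAB
      _ = c⁻¹ * (c * μ (A ∩ B)) := by
          rw [← mul_assoc, ENNReal.inv_mul_cancel hc0 hct, one_mul]
      _ ≤ c⁻¹ * (ENNReal.ofReal ((1 - θ)⁻¹ ^ a) ^ n) := mul_le_mul_right hkey _
  rw [hmap]
  have : c⁻¹ = ENNReal.ofReal (Real.exp (-(θ * (n * s)))) := by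
    rw [Real.exp_neg, ENNReal.ofReal_inv_of_pos (Real.exp_pos _)]
  rwa [← this]

lemma hole_gamma_tail {a : ℝ} (ha : 1 ≤ a) {s : ℝ} (hs : 0 < s) :
    ENNReal.ofReal (s ^ (a - 1) * Real.exp (-(s + 1)) / Real.Gamma a)
      ≤ gammaMeasure a 1 (Ioi s) := by
  have ha0 : (0:ℝ) < a := lt_of_lt_of_le one_pos ha
  have hΓ : 0 < Real.Gamma a := Real.Gamma_pos_of_pos ha0
  rw [gammaMeasure, withDensity_apply _ measurableSet_Ioi]
  have hvol : (volume (Ioc s (s + 1))) = 1 := by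
    rw [Real.volume_Ioc]
    norm_num
  calc ENNReal.ofReal (s ^ (a - 1) * Real.exp (-(s + 1)) / Real.Gamma a)
      = ∫⁻ _ in Ioc s (s + 1),
          ENNReal.ofReal (s ^ (a - 1) * Real.exp (-(s + 1)) / Real.Gamma a) := by
        rw [setLIntegral_const, hvol, mul_one]
    _ ≤ ∫⁻ x in Ioc s (s + 1), gammaPDF a 1 x := by
        apply setLIntegral_mono ((measurable_gammaPDFReal a 1).ennreal_ofReal)
        intro x hx
        obtain ⟨hx1, hx2⟩ := hx
        have hx0 : (0:ℝ) ≤ x := le_trans hs.le hx1.le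
        rw [gammaPDFReal, if_pos hx0]
        apply ENNReal.ofReal_le_ofReal
        have h1 : s ^ (a - 1) ≤ x ^ (a - 1) :=
          Real.rpow_le_rpow hs.le hx1.le (by linarith)
        have h2 : Real.exp (-(s + 1)) ≤ Real.exp (-(1 * x)) := by
          rw [one_mul]
          exact Real.exp_le_exp.2 (by linarith)
        have hineq : s ^ (a - 1) * Real.exp (-(s + 1)) ≤ x ^ (a - 1) * Real.exp (-(1 * x)) :=
          mul_le_mul h1 h2 (Real.exp_pos _).le (Real.rpow_nonneg hx0 _)
        calc s ^ (a - 1) * Real.exp (-(s + 1)) / Real.Gamma a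
            = (s ^ (a - 1) * Real.exp (-(s + 1))) * (Real.Gamma a)⁻¹ := by ring
          _ ≤ (x ^ (a - 1) * Real.exp (-(1 * x))) * (Real.Gamma a)⁻¹ :=
              mul_le_mul_of_nonneg_right hineq (by positivity)
          _ = 1 ^ a / Real.Gamma a * x ^ (a - 1) * Real.exp (-(1 * x)) := by
              rw [Real.one_rpow]; ring
    _ ≤ ∫⁻ x in Ioi s, gammaPDF a 1 x := lintegral_mono_set Ioc_subset_Ioi_self

lemma hole_M_lower {a : ℝ} (ha : 1 ≤ a) {n : ℕ} (hn : 0 < n) {s : ℝ} (hs : 0 < s) :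
    ENNReal.ofReal (s ^ (a - 1) * Real.exp (-(s + 1)) / Real.Gamma a) ^ n
      ≤ holeM n a (Ioi (s ^ n)) := by
  haveI : Nonempty (Fin n) := Fin.pos_iff_nonempty.1 hn
  haveI : IsProbabilityMeasure (gammaMeasure a 1) :=
    isProbabilityMeasure_gammaMeasure (lt_of_lt_of_le one_pos ha) one_pos
  have hprodm : Measurable (fun y : Fin n → ℝ => ∏ j, y j) :=
    Finset.measurable_prod _ (fun j _ => measurable_pi_apply j)
  rw [holeM, Measure.map_apply hprodm measurableSet_Ioi]
  have hsub : Set.pi univ (fun _ : Fin n => Ioi s) ⊆ (fun y => ∏ j, y j) ⁻¹' (Ioi (s ^ n)) := by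
    intro y hy
    simp only [mem_preimage, mem_Ioi]
    have h := Finset.prod_lt_prod_of_nonempty (f := fun _ : Fin n => s) (g := y)
      (fun j _ => hs) (fun j _ => hy j (Set.mem_univ j)) Finset.univ_nonempty
    simpa [Finset.prod_const, Finset.card_univ] using h
  calc ENNReal.ofReal (s ^ (a - 1) * Real.exp (-(s + 1)) / Real.Gamma a) ^ n
      ≤ gammaMeasure a 1 (Ioi s) ^ n := by
        gcongr
        exact hole_gamma_tail ha hs
    _ = (Measure.pi fun _ : Fin n => gammaMeasure a 1) (Set.pi univ fun _ => Ioi s) := by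
        rw [Measure.pi_pi]
        simp [Finset.prod_const, Finset.card_univ]
    _ ≤ _ := measure_mono hsub

lemma hole_M_prob {n : ℕ} {a : ℝ} (ha : 0 < a) : IsProbabilityMeasure (holeM n a) := by
  haveI : IsProbabilityMeasure (gammaMeasure a 1) := isProbabilityMeasure_gammaMeasure ha one_pos
  exact Measure.isProbabilityMeasure_map
    (Finset.measurable_prod _ (fun j _ => measurable_pi_apply j)).aemeasurable

lemma hole_log_div_self_tendsto : Tendsto (fun s : ℝ => Real.log s / s) atTop (nhds 0) := by
  have h := (isLittleO_log_rpow_atTop one_pos).tendsto_div_nhds_zero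
  apply h.congr'
  filter_upwards [eventually_gt_atTop (0:ℝ)] with s hs
  rw [Real.rpow_one]

lemma hole_key_tendsto {n : ℕ} (hn : 0 < n) {a : ℝ} (ha : 1 ≤ a) :
    Tendsto (fun s : ℝ => s⁻¹ * Real.log ((holeM n a (Ioi (s ^ n))).toReal))
      atTop (nhds (-(n : ℝ))) := by
  have ha0 : (0:ℝ) < a := lt_of_lt_of_le one_pos ha
  have hΓ : 0 < Real.Gamma a := Real.Gamma_pos_of_pos ha0
  haveI : IsProbabilityMeasure (holeM n a) := hole_M_prob ha0
  set L : ℝ → ℝ := fun s => (n * (a - 1)) * (Real.log s / s) - n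
    - (n * (1 + Real.log (Real.Gamma a))) * s⁻¹ with hL
  set U : ℝ → ℝ := fun s => -(n:ℝ) + (n:ℝ) * s⁻¹ + ((n:ℝ) * a) * (Real.log s / s) with hU
  have hLt : Tendsto L atTop (nhds (-(n:ℝ))) := by
    have : Tendsto L atTop
        (nhds ((n * (a-1)) * 0 - n - (n * (1 + Real.log (Real.Gamma a))) * 0)) := by
      exact ((hole_log_div_self_tendsto.const_mul _).sub_const _).sub
        (tendsto_inv_atTop_zero.const_mul _)
    simpa using this
  have hUt : Tendsto U atTop (nhds (-(n:ℝ))) := by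
    have : Tendsto U atTop (nhds (-(n:ℝ) + (n:ℝ) * 0 + ((n:ℝ) * a) * 0)) := by
      exact ((tendsto_inv_atTop_zero.const_mul _).const_add _).add
        (hole_log_div_self_tendsto.const_mul _)
    simpa using this
  apply tendsto_of_tendsto_of_tendsto_of_le_of_le' hLt hUt
  · filter_upwards [eventually_gt_atTop (1:ℝ)] with s hs1
    have hs0 : (0:ℝ) < s := lt_trans one_pos hs1
    set b : ℝ := s ^ (a - 1) * Real.exp (-(s + 1)) / Real.Gamma a with hb
    have hbpos : 0 < b := by positivity
    have hlow := hole_M_lower ha hn hs0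
    have hble : b ^ n ≤ (holeM n a (Ioi (s ^ n))).toReal := by
      have := ENNReal.toReal_mono (measure_ne_top _ _) hlow
      rwa [ENNReal.toReal_pow, ENNReal.toReal_ofReal hbpos.le] at this
    have hqpos : 0 < (holeM n a (Ioi (s ^ n))).toReal := lt_of_lt_of_le (by positivity) hble
    have hlog : Real.log (b ^ n) ≤ Real.log ((holeM n a (Ioi (s ^ n))).toReal) :=
      Real.log_le_log (by positivity) hble
    have hlogb : Real.log (b ^ n)
        = n * ((a - 1) * Real.log s - (s + 1) - Real.log (Real.Gamma a)) := by
      rw [Real.log_pow, hb, Real.log_div (by positivity) hΓ.ne',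
        Real.log_mul (by positivity) (Real.exp_ne_zero _), Real.log_rpow hs0, Real.log_exp]
      ring
    have hmul : s⁻¹ * Real.log (b ^ n) ≤ s⁻¹ * Real.log ((holeM n a (Ioi (s ^ n))).toReal) :=
      mul_le_mul_of_nonneg_left hlog (by positivity)
    refine le_trans (le_of_eq ?_) hmul
    rw [hlogb, hL]
    field_simp
    ring
  · filter_upwards [eventually_gt_atTop (1:ℝ)] with s hs1
    have hs0 : (0:ℝ) < s := lt_trans one_pos hs1
    set θ : ℝ := 1 - 1/s with hθdef
    have hθ0 : 0 ≤ θ := by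
      rw [hθdef]
      have : 1/s ≤ 1 := by
        rw [div_le_one hs0]; linarith
      linarith
    have hθ1 : θ < 1 := by
      rw [hθdef]
      have : 0 < 1/s := by positivity
      linarith
    have hch := hole_chernoff ha0 hθ0 hθ1 hn hs0
    have h1θ : (1 - θ)⁻¹ = s := by
      rw [hθdef]; field_simp; ring
    rw [h1θ] at hch
    have hq_le : (holeM n a (Ioi (s ^ n))).toReal
        ≤ Real.exp (-(θ * (n * s))) * (s ^ a) ^ n := by
      have := ENNReal.toReal_mono
        (ENNReal.mul_ne_top ENNReal.ofReal_ne_top (ENNReal.pow_ne_top ENNReal.ofReal_ne_top)) hch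
      rwa [ENNReal.toReal_mul, ENNReal.toReal_pow, ENNReal.toReal_ofReal (Real.exp_pos _).le,
        ENNReal.toReal_ofReal (Real.rpow_nonneg hs0.le _)] at this
    have hqpos : 0 < (holeM n a (Ioi (s ^ n))).toReal := by
      have hbpos : (0:ℝ) < s ^ (a - 1) * Real.exp (-(s + 1)) / Real.Gamma a := by positivity
      have hble : (s ^ (a - 1) * Real.exp (-(s + 1)) / Real.Gamma a) ^ n
          ≤ (holeM n a (Ioi (s ^ n))).toReal := by
        have := ENNReal.toReal_mono (measure_ne_top _ _) (hole_M_lower ha hn hs0)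
        rwa [ENNReal.toReal_pow, ENNReal.toReal_ofReal hbpos.le] at this
      exact lt_of_lt_of_le (by positivity) hble
    have hlog : Real.log ((holeM n a (Ioi (s ^ n))).toReal)
        ≤ -(θ * (n * s)) + n * (a * Real.log s) := by
      calc Real.log ((holeM n a (Ioi (s ^ n))).toReal)
          ≤ Real.log (Real.exp (-(θ * (n * s))) * (s ^ a) ^ n) := Real.log_le_log hqpos hq_le
        _ = -(θ * (n * s)) + n * (a * Real.log s) := by
            rw [Real.log_mul (Real.exp_ne_zero _) (by positivity),
              Real.log_exp, Real.log_pow, Real.log_rpow hs0]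
    have hmul : s⁻¹ * Real.log ((holeM n a (Ioi (s ^ n))).toReal)
        ≤ s⁻¹ * (-(θ * (n * s)) + n * (a * Real.log s)) :=
      mul_le_mul_of_nonneg_left hlog (by positivity)
    refine le_trans hmul (le_of_eq ?_)
    rw [hU, hθdef]
    field_simp
    ring

lemma hole_prodGamma_eq (n k : ℕ) : prodGammaMeasure n k = holeM n k := rfl

end AuxLemmas

/-- Hole probability decay for the generalized finite-`N` Ginibre ensemble:
`lim_{r→∞} r^{−2/n} log ∏_{k=1}^N P(R_k² > r²) = −nN`.
Here `R k` stands for `R_{k+1}`, so `R k ^ 2` is a product of `n` i.i.d. `Gamma(k+1,1)`. -/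
theorem hole_probability_finite_ginibre {Ω : Type*} [MeasureSpace Ω]
    [IsProbabilityMeasure (ℙ : Measure Ω)]
    (n N : ℕ) (hn : 0 < n) (hN : 0 < N)
    (R : ℕ → Ω → ℝ) (hRm : ∀ k, Measurable (R k)) (hR0 : ∀ k ω, 0 ≤ R k ω)
    (hRdist : ∀ k, k < N → Measure.map (fun ω => R k ω ^ 2) ℙ = prodGammaMeasure n (k + 1)) :
    Tendsto (fun r : ℝ =>
        r ^ (-(2 : ℝ) / n) *
          Real.log (∏ k ∈ Finset.range N, (ℙ {ω | r ^ 2 < R k ω ^ 2}).toReal))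
      atTop (nhds (-((n : ℝ) * N))) := by
  have hn' : (0:ℝ) < n := Nat.cast_pos.2 hn
  -- the probabilities in terms of holeM
  have hP : ∀ k, k < N → ∀ r : ℝ,
      ℙ {ω | r ^ 2 < R k ω ^ 2} = holeM n ((k+1 : ℕ) : ℝ) (Ioi (r ^ 2)) := by
    intro k hk r
    have hmeas : Measurable (fun ω => R k ω ^ 2) := (hRm k).pow_const 2
    have : {ω | r ^ 2 < R k ω ^ 2} = (fun ω => R k ω ^ 2) ⁻¹' (Ioi (r ^ 2)) := rfl
    rw [this, ← Measure.map_apply hmeas measurableSet_Ioi, hRdist k hk, hole_prodGamma_eq]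
  -- the auxiliary function of s
  set G : ℝ → ℝ := fun s => ∑ k ∈ Finset.range N,
    s⁻¹ * Real.log ((holeM n ((k+1 : ℕ) : ℝ) (Ioi (s ^ n))).toReal) with hG
  have hGt : Tendsto G atTop (nhds (-((n:ℝ) * N))) := by
    have h1 : Tendsto G atTop (nhds (∑ k ∈ Finset.range N, (-(n:ℝ)))) := by
      apply tendsto_finset_sum
      intro k _
      exact hole_key_tendsto hn (by exact_mod_cast Nat.one_le_iff_ne_zero.2 (Nat.succ_ne_zero k))
    have h2 : (∑ _k ∈ Finset.range N, (-(n:ℝ))) = -((n:ℝ) * N) := by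
      rw [Finset.sum_const, Finset.card_range, nsmul_eq_mul]
      ring
    rwa [h2] at h1
  have hφ : Tendsto (fun r : ℝ => r ^ ((2:ℝ)/n)) atTop atTop :=
    tendsto_rpow_atTop (by positivity)
  have hcomp := hGt.comp hφ
  apply hcomp.congr'
  filter_upwards [eventually_gt_atTop (1:ℝ)] with r hr1
  have hr0 : (0:ℝ) < r := lt_trans one_pos hr1
  set s : ℝ := r ^ ((2:ℝ)/n) with hs
  have hs1 : 1 < s := Real.one_lt_rpow_iff_of_pos hr0 |>.2 (Or.inl ⟨hr1, by positivity⟩)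
  have hs0 : (0:ℝ) < s := lt_trans one_pos hs1
  have hsn : s ^ n = r ^ 2 := by
    rw [hs, ← Real.rpow_natCast (r ^ ((2:ℝ)/n)) n, ← Real.rpow_mul hr0.le,
      div_mul_cancel₀ _ hn'.ne']
    norm_num
  have hrinv : r ^ (-(2:ℝ)/n) = s⁻¹ := by
    rw [neg_div, Real.rpow_neg hr0.le, hs]
  -- positivity of each factor
  have hfacpos : ∀ k ∈ Finset.range N,
      (ℙ {ω | r ^ 2 < R k ω ^ 2}).toReal ≠ 0 := by
    intro k hk
    rw [hP k (Finset.mem_range.1 hk) r, ← hsn]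
    have ha1 : (1:ℝ) ≤ ((k+1 : ℕ) : ℝ) := by exact_mod_cast Nat.succ_le_succ (Nat.zero_le k)
    have ha0 : (0:ℝ) < ((k+1 : ℕ) : ℝ) := lt_of_lt_of_le one_pos ha1
    haveI : IsProbabilityMeasure (holeM n ((k+1 : ℕ) : ℝ)) := hole_M_prob ha0
    have hbpos : (0:ℝ) < s ^ (((k+1 : ℕ) : ℝ) - 1) * Real.exp (-(s + 1))
        / Real.Gamma ((k+1 : ℕ) : ℝ) := by
      have := Real.Gamma_pos_of_pos ha0
      positivity
    have hble : (s ^ (((k+1 : ℕ) : ℝ) - 1) * Real.exp (-(s + 1))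
        / Real.Gamma ((k+1 : ℕ) : ℝ)) ^ n
        ≤ (holeM n ((k+1 : ℕ) : ℝ) (Ioi (s ^ n))).toReal := by
      have := ENNReal.toReal_mono (measure_ne_top _ _) (hole_M_lower ha1 hn hs0)
      rwa [ENNReal.toReal_pow, ENNReal.toReal_ofReal hbpos.le] at this
    exact (lt_of_lt_of_le (by positivity) hble).ne'
  rw [Real.log_prod hfacpos]
  rw [Function.comp_apply]
  rw [hrinv, Finset.mul_sum]
  apply Finset.sum_congr rfl
  intro k hk
  rw [hP k (Finset.mem_range.1 hk) r, ← hsn]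
end

section
/- For complex numbers z₁,…,z_N with polar decompositions z_j = r_j e^{iθ_j}, the angular average of the squared Vandermonde satisfies (1/(2π)^N)∫_{[0,2π]^N} ∏_{1≤i<j≤N} |z_i − z_j|² dθ_1⋯dθ_N = ∑_{σ∈S_N} ∏_{j=1}^N r_j^{2σ(j)−2} = per[r_i^{2(j−1)}]_{i,j=1}^N. -/
open MeasureTheory

noncomputable def epsC {N : ℕ} (σ : Equiv.Perm (Fin N)) : ℂ := ((Equiv.Perm.sign σ : ℤ) : ℂ)

lemma integral_exp_int (n : ℤ) :
    ∫ t in Set.Icc (0:ℝ) (2*Real.pi), Complex.exp ((n:ℂ) * t * Complex.I) =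
      if n = 0 then ((2*Real.pi : ℝ) : ℂ) else 0 := by
  have h2 : (0:ℝ) ≤ 2*Real.pi := by positivity
  rw [integral_Icc_eq_integral_Ioc, ← intervalIntegral.integral_of_le h2]
  by_cases hn : n = 0
  · simp [hn]
  · have hc : (n:ℂ) * Complex.I ≠ 0 := by
      simp [Complex.I_ne_zero, hn]
    have key := integral_exp_mul_complex hc (a := 0) (b := 2*Real.pi)
    have h1 : Complex.exp ((n:ℂ) * Complex.I * ((2*Real.pi:ℝ):ℂ)) = 1 := by
      rw [show ((n:ℂ) * Complex.I * ((2*Real.pi : ℝ):ℂ)) = n * (2*Real.pi*Complex.I) by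
        push_cast; ring]
      exact Complex.exp_int_mul_two_pi_mul_I n
    rw [h1] at key
    have : ∀ t : ℝ, (n:ℂ) * t * Complex.I = (n * Complex.I) * t := fun t => by ring
    simp_rw [this, key, if_neg hn]
    simp

lemma prod_pairs {N : ℕ} {M : Type*} [CommMonoid M] (f : Fin N → Fin N → M) :
    ∏ p ∈ Finset.univ.filter (fun p : Fin N × Fin N => p.1 < p.2), f p.1 p.2
      = ∏ i, ∏ j ∈ Finset.Ioi i, f i j := by
  rw [Finset.prod_sigma']
  refine Finset.prod_nbij (fun p => ⟨p.1, p.2⟩) ?_ ?_ ?_ ?_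
  · rintro ⟨i, j⟩ h
    simp only [Finset.mem_filter, Finset.mem_univ, true_and] at h
    simp [h]
  · rintro ⟨i, j⟩ - ⟨i', j'⟩ - h
    simpa [Sigma.ext_iff, Prod.ext_iff] using h
  · rintro ⟨i, j⟩ h
    simp only [Finset.mem_coe, Finset.mem_sigma, Finset.mem_univ, Finset.mem_Ioi, true_and] at h
    exact ⟨(i, j), by simp [h], rfl⟩
  · rintro ⟨i, j⟩ -
    rfl

lemma det_vandermonde_expand {N : ℕ} (w : Fin N → ℂ) :
    Matrix.det (Matrix.vandermonde w)
      = ∑ σ : Equiv.Perm (Fin N), epsC σ * ∏ j, w j ^ (σ j : ℕ) := by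
  rw [← Matrix.det_transpose, Matrix.det_apply']
  exact Finset.sum_congr rfl fun σ _ => by simp [epsC, Matrix.vandermonde]

lemma conj_det_vandermonde {N : ℕ} (w : Fin N → ℂ) :
    (starRingEnd ℂ) (Matrix.det (Matrix.vandermonde w))
      = ∑ τ : Equiv.Perm (Fin N), epsC τ * ∏ j, ((starRingEnd ℂ) (w j)) ^ (τ j : ℕ) := by
  rw [det_vandermonde_expand, map_sum]
  exact Finset.sum_congr rfl fun τ _ => by simp [epsC, map_prod]

lemma pow_mul_conj_pow (ρ t : ℝ) (a b : ℕ) :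
    ((ρ:ℂ) * Complex.exp (t * Complex.I))^a
        * ((starRingEnd ℂ) ((ρ:ℂ) * Complex.exp (t * Complex.I)))^b
      = (ρ:ℂ)^(a+b) * Complex.exp ((((a:ℤ) - (b:ℤ) : ℤ):ℂ) * t * Complex.I) := by
  have hconj : (starRingEnd ℂ) ((ρ:ℂ) * Complex.exp ((t:ℂ) * Complex.I))
      = (ρ:ℂ) * Complex.exp (-((t:ℂ) * Complex.I)) := by
    rw [map_mul, Complex.conj_ofReal, ← Complex.exp_conj]
    congr 1
    simp [Complex.conj_ofReal]
  rw [hconj, mul_pow, mul_pow, ← Complex.exp_nat_mul, ← Complex.exp_nat_mul,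
    mul_mul_mul_comm, ← pow_add, ← Complex.exp_add]
  congr 1
  push_cast
  ring

lemma key_integral (N : ℕ) (r : Fin N → ℝ) :
    (∫ θ : Fin N → ℝ in Set.univ.pi (fun _ => Set.Icc 0 (2 * Real.pi)),
        ∏ p ∈ Finset.univ.filter (fun p : Fin N × Fin N => p.1 < p.2),
          ‖(r p.1 : ℂ) * Complex.exp ((θ p.1 : ℝ) * Complex.I) -
            (r p.2 : ℂ) * Complex.exp ((θ p.2 : ℝ) * Complex.I)‖ ^ 2
        ∂(Measure.pi fun _ => volume))
      = (2*Real.pi)^N * ∑ σ : Equiv.Perm (Fin N), ∏ j, r j ^ (2 * (σ j : ℕ)) := by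
  rw [← MeasureTheory.volume_pi]
  set S : Set (Fin N → ℝ) := Set.univ.pi (fun _ => Set.Icc 0 (2 * Real.pi)) with hSdef
  have hSmeas : MeasurableSet S := MeasurableSet.univ_pi fun _ => measurableSet_Icc
  have hScompact : IsCompact S := isCompact_univ_pi fun _ => isCompact_Icc
  set g : Equiv.Perm (Fin N) → Equiv.Perm (Fin N) → Fin N → ℝ → ℂ := fun σ τ j t =>
    (r j:ℂ)^((σ j:ℕ)+(τ j:ℕ))
      * Complex.exp ((((((σ j:ℕ):ℤ) - ((τ j:ℕ):ℤ)) : ℤ):ℂ) * t * Complex.I) with hgdef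
  set T : Equiv.Perm (Fin N) → Equiv.Perm (Fin N) → (Fin N → ℝ) → ℂ := fun σ τ θ =>
    epsC σ * epsC τ * ∏ j, g σ τ j (θ j) with hTdef
  -- pointwise identity
  have hpt : ∀ θ : Fin N → ℝ,
      (∏ p ∈ Finset.univ.filter (fun p : Fin N × Fin N => p.1 < p.2),
          ‖(r p.1 : ℂ) * Complex.exp ((θ p.1 : ℝ) * Complex.I) -
            (r p.2 : ℂ) * Complex.exp ((θ p.2 : ℝ) * Complex.I)‖ ^ 2)
        = (∑ σ : Equiv.Perm (Fin N), ∑ τ : Equiv.Perm (Fin N), T σ τ θ).re := by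
    intro θ
    set v : Fin N → ℂ := fun j => (r j:ℂ) * Complex.exp ((θ j : ℝ) * Complex.I) with hvdef
    have h1 : (∏ p ∈ Finset.univ.filter (fun p : Fin N × Fin N => p.1 < p.2),
          ‖v p.1 - v p.2‖ ^ 2)
        = Complex.normSq (Matrix.det (Matrix.vandermonde v)) := by
      simp_rw [Complex.sq_norm]
      rw [prod_pairs (fun i j => Complex.normSq (v i - v j)), Matrix.det_vandermonde, map_prod]
      refine Finset.prod_congr rfl fun i _ => ?_
      rw [map_prod]
      exact Finset.prod_congr rfl fun j _ => by rw [← Complex.normSq_neg, neg_sub]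
    have h2 : (Matrix.det (Matrix.vandermonde v)
          * (starRingEnd ℂ) (Matrix.det (Matrix.vandermonde v)))
        = ∑ σ : Equiv.Perm (Fin N), ∑ τ : Equiv.Perm (Fin N), T σ τ θ := by
      rw [conj_det_vandermonde, det_vandermonde_expand, Finset.sum_mul_sum]
      refine Finset.sum_congr rfl fun σ _ => Finset.sum_congr rfl fun τ _ => ?_
      rw [hTdef, mul_mul_mul_comm, ← Finset.prod_mul_distrib]
      congr 1
      exact Finset.prod_congr rfl fun j _ => pow_mul_conj_pow (r j) (θ j) _ _
    rw [h1, ← h2, Complex.mul_conj, Complex.ofReal_re]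
  -- continuity and integrability
  have hTcont : ∀ σ τ, Continuous (T σ τ) := by
    intro σ τ
    apply continuous_const.mul
    apply continuous_finset_prod
    intro j _
    apply continuous_const.mul
    apply Complex.continuous_exp.comp
    exact (continuous_const.mul (Complex.continuous_ofReal.comp (continuous_apply j))).mul
      continuous_const
  have hTint : ∀ σ τ, IntegrableOn (T σ τ) S :=
    fun σ τ => ((hTcont σ τ).continuousOn).integrableOn_compact hScompact
  have hHint : IntegrableOn (fun θ => ∑ σ : Equiv.Perm (Fin N),
      ∑ τ : Equiv.Perm (Fin N), T σ τ θ) S := by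
    apply integrable_finset_sum
    intro σ _
    exact integrable_finset_sum _ fun τ _ => hTint σ τ
  -- per-term integral
  have hterm : ∀ σ τ : Equiv.Perm (Fin N), (∫ θ in S, T σ τ θ)
      = epsC σ * epsC τ * ∏ j, ((r j:ℂ)^((σ j:ℕ)+(τ j:ℕ))
          * (if σ j = τ j then ((2*Real.pi:ℝ):ℂ) else 0)) := by
    intro σ τ
    rw [hTdef]
    simp only
    rw [integral_const_mul]
    congr 1
    have hind : ∀ θ : Fin N → ℝ,
        S.indicator (fun θ => ∏ j, g σ τ j (θ j)) θ
          = ∏ j, (Set.Icc (0:ℝ) (2*Real.pi)).indicator (g σ τ j) (θ j) := by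
      intro θ
      by_cases h : θ ∈ S
      · rw [Set.indicator_of_mem h]
        exact Finset.prod_congr rfl fun j _ =>
          (Set.indicator_of_mem (h j (Set.mem_univ j)) _).symm
      · rw [Set.indicator_of_notMem h]
        rw [hSdef, Set.mem_univ_pi] at h
        push_neg at h
        obtain ⟨j, hj⟩ := h
        exact (Finset.prod_eq_zero (Finset.mem_univ j)
          (Set.indicator_of_notMem hj _)).symm
    rw [← integral_indicator hSmeas]
    simp_rw [hind]
    rw [MeasureTheory.integral_fintype_prod_volume_eq_prod (ι := Fin N)
      (fun j => (Set.Icc (0:ℝ) (2*Real.pi)).indicator (g σ τ j))]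
    refine Finset.prod_congr rfl fun j _ => ?_
    rw [integral_indicator measurableSet_Icc, hgdef]
    simp only
    rw [integral_const_mul, integral_exp_int]
    congr 1
    have : ((((σ j:ℕ):ℤ) - ((τ j:ℕ):ℤ)) = 0) ↔ σ j = τ j := by
      rw [sub_eq_zero, Int.natCast_inj, Fin.val_eq_val]
    simp [this]
  -- sum over τ
  have hdiag : ∀ σ : Equiv.Perm (Fin N),
      (∑ τ : Equiv.Perm (Fin N), epsC σ * epsC τ * ∏ j, ((r j:ℂ)^((σ j:ℕ)+(τ j:ℕ))
          * (if σ j = τ j then ((2*Real.pi:ℝ):ℂ) else 0)))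
        = ((2*Real.pi:ℝ):ℂ)^N * ∏ j, (r j:ℂ)^(2*(σ j:ℕ)) := by
    intro σ
    rw [Finset.sum_eq_single σ]
    · have hsgn : epsC σ * epsC σ = 1 := by
        unfold epsC
        rw [← Int.cast_mul, ← Units.val_mul, Int.units_mul_self, Units.val_one, Int.cast_one]
      simp only [if_pos rfl]
      rw [hsgn, one_mul, Finset.prod_mul_distrib, Finset.prod_const, Finset.card_univ,
        Fintype.card_fin, mul_comm]
      congr 1
      exact Finset.prod_congr rfl fun j _ => by rw [two_mul]
    · intro τ _ hτ
      obtain ⟨j, hj⟩ : ∃ j, σ j ≠ τ j := by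
        by_contra h
        push_neg at h
        exact hτ (Equiv.ext h).symm
      rw [Finset.prod_eq_zero (Finset.mem_univ j) (by rw [if_neg hj, mul_zero]), mul_zero]
    · intro h
      exact absurd (Finset.mem_univ σ) h
  -- put it all together
  calc (∫ θ in S, ∏ p ∈ Finset.univ.filter (fun p : Fin N × Fin N => p.1 < p.2),
          ‖(r p.1 : ℂ) * Complex.exp ((θ p.1 : ℝ) * Complex.I) -
            (r p.2 : ℂ) * Complex.exp ((θ p.2 : ℝ) * Complex.I)‖ ^ 2)
      = ∫ θ in S, (∑ σ : Equiv.Perm (Fin N), ∑ τ : Equiv.Perm (Fin N), T σ τ θ).re :=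
        integral_congr_ae (Filter.Eventually.of_forall hpt)
    _ = (∫ θ in S, ∑ σ : Equiv.Perm (Fin N), ∑ τ : Equiv.Perm (Fin N), T σ τ θ).re := by
        simpa using integral_re hHint
    _ = (∑ σ : Equiv.Perm (Fin N), ∑ τ : Equiv.Perm (Fin N), ∫ θ in S, T σ τ θ).re := by
        rw [integral_finset_sum _ (fun σ _ => integrable_finset_sum _ fun τ _ => hTint σ τ)]
        congr 1
        exact Finset.sum_congr rfl fun σ _ => integral_finset_sum _ fun τ _ => hTint σ τ
    _ = (((2*Real.pi)^N * ∑ σ : Equiv.Perm (Fin N), ∏ j, r j ^ (2 * (σ j : ℕ)) : ℝ) : ℂ).re := by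
        congr 1
        simp_rw [hterm, hdiag]
        rw [← Finset.mul_sum]
        push_cast
        ring
    _ = (2*Real.pi)^N * ∑ σ : Equiv.Perm (Fin N), ∏ j, r j ^ (2 * (σ j : ℕ)) :=
        Complex.ofReal_re _

/-- Angular average of the squared Vandermonde determinant:
`(1/(2π)^N) ∫ ∏_{i<j} |r_i e^{iθ_i} − r_j e^{iθ_j}|² dθ = ∑_{σ∈S_N} ∏_j r_j^{2σ(j)}`
(with zero-based indexing), the permanent `per[r_i^{2(j−1)}]`. -/
theorem angular_average_vandermonde (N : ℕ) (r : Fin N → ℝ) (hr : ∀ j, 0 ≤ r j) :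
    (1 / (2 * Real.pi) ^ N) *
        ∫ θ : Fin N → ℝ in Set.univ.pi (fun _ => Set.Icc 0 (2 * Real.pi)),
          ∏ p ∈ Finset.univ.filter (fun p : Fin N × Fin N => p.1 < p.2),
            ‖(r p.1 : ℂ) * Complex.exp ((θ p.1 : ℝ) * Complex.I) -
              (r p.2 : ℂ) * Complex.exp ((θ p.2 : ℝ) * Complex.I)‖ ^ 2
          ∂(Measure.pi fun _ => volume)
      = ∑ σ : Equiv.Perm (Fin N), ∏ j, r j ^ (2 * (σ j : ℕ)) := by
  rw [key_integral, ← mul_assoc, one_div,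
    inv_mul_cancel₀ (pow_ne_zero _ (by positivity : (2*Real.pi : ℝ) ≠ 0)), one_mul]
end
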